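/- arXiv:2409.00500 — 4 statements merged into one kernel-verified Lean document; each statement's English description precedes it below -/
import Mathlib

section
/- Let 𝒜 be a commuting family with a semisimple joint eigenvalue 𝛌 = (λ₁,…,λ_d) of multiplicity p. Then there exist invertible matrices X = [X₁ X₂] and Y = [Y₁ Y₂] in ℂ^{n×n} with X₁*X₁ = I_p, Y*X = Iₙ, and Y*AₖX = diag(λₖI_p, A₂₂^{(k)}) for each k = 1,…,d, for some A₂₂^{(k)} ∈ ℂ^{(n−p)×(n−p)}. -/
open Module Module.End Matrix

lemma lemA {ι V : Type*} [AddCommGroup V] [Module ℂ V] (f : ι → Module.End ℂ V) (χ : ι → ℂ)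
    (hTop : ⨆ χ' : ι → ℂ, ⨅ k, Module.End.maxGenEigenspace (f k) (χ' k) = ⊤)
    (E : Submodule ℂ V) (hE : E ≠ ⊤)
    (hq : ∀ k v, f k v - χ k • v ∈ E) :
    ¬ (⨅ k, Module.End.maxGenEigenspace (f k) (χ k)) ≤ E := by
  intro hle
  apply hE
  rw [← top_le_iff, ← hTop, iSup_le_iff]
  intro χ'
  by_cases h : χ' = χ
  · subst h; exact hle
  · obtain ⟨j, hj⟩ : ∃ j, χ' j ≠ χ j := Function.ne_iff.mp h
    intro v hv
    have hv' : v ∈ Module.End.maxGenEigenspace (f j) (χ' j) :=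
      (Submodule.mem_iInf _).mp hv j
    rw [Module.End.mem_maxGenEigenspace] at hv'
    obtain ⟨m, hm⟩ := hv'
    have key : ∀ (m : ℕ) (w : V),
        E.mkQ (((f j - χ' j • (1 : Module.End ℂ V)) ^ m) w)
          = (χ j - χ' j) ^ m • E.mkQ w := by
      intro m
      induction m with
      | zero => intro w; simp
      | succ m ih =>
        intro w
        rw [pow_succ, pow_succ]
        have h1 : (f j - χ' j • (1 : Module.End ℂ V)) w
            = (f j w - χ j • w) + (χ j - χ' j) • w := by
          simp [sub_smul]
        have hz : E.mkQ ((f j) w - χ j • w) = 0 :=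
          (Submodule.Quotient.mk_eq_zero E).mpr (hq j w)
        rw [Module.End.mul_apply, ih, h1, map_add, hz, zero_add,
          _root_.map_smul, smul_smul]
    have h0 := key m v
    rw [hm, map_zero] at h0
    have hne : ((χ j - χ' j) ^ m : ℂ) ≠ 0 := pow_ne_zero _ (sub_ne_zero.mpr (Ne.symm hj))
    have : E.mkQ v = 0 := by
      rcases smul_eq_zero.mp h0.symm with h | h
      · exact absurd h hne
      · exact h
    exact (Submodule.Quotient.mk_eq_zero E).mp this

noncomputable def Jmap (n : ℕ) : (Fin n → ℂ) →ₗ[ℂ] (Fin (n+1) → ℂ) where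
  toFun x := Fin.snoc x 0
  map_add' x y := by
    funext i
    refine Fin.lastCases ?_ (fun i => ?_) i <;> simp
  map_smul' c x := by
    funext i
    refine Fin.lastCases ?_ (fun i => ?_) i <;> simp

lemma Jmap_inj (n : ℕ) : Function.Injective (Jmap n) := by
  intro x y h
  funext i
  have := congrFun h (Fin.castSucc i)
  simpa [Jmap] using this

lemma mulVec_snoc {n : ℕ} (T : Matrix (Fin (n+1)) (Fin (n+1)) ℂ) (hT : T.BlockTriangular id)
    (x : Fin n → ℂ) :
    T *ᵥ (Fin.snoc x 0) = Fin.snoc ((T.submatrix Fin.castSucc Fin.castSucc) *ᵥ x) (0:ℂ) := by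
  funext i
  refine Fin.lastCases ?_ (fun i => ?_) i
  · have hz : ∀ j : Fin n, T (Fin.last n) (Fin.castSucc j) = 0 :=
      fun j => hT (Fin.castSucc_lt_last j)
    simp [Matrix.mulVec, dotProduct, Fin.sum_univ_castSucc, hz]
  · simp [Matrix.mulVec, dotProduct, Fin.sum_univ_castSucc]

lemma snoc_step {n : ℕ} (T : Matrix (Fin (n+1)) (Fin (n+1)) ℂ) (hT : T.BlockTriangular id)
    (c : ℂ) (x : Fin n → ℂ) :
    (T.mulVecLin - c • (1 : Module.End ℂ (Fin (n+1) → ℂ))) (Fin.snoc x 0)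
      = Fin.snoc (((T.submatrix Fin.castSucc Fin.castSucc).mulVecLin
          - c • (1 : Module.End ℂ (Fin n → ℂ))) x) (0:ℂ) := by
  have h1 : (T.mulVecLin - c • (1 : Module.End ℂ (Fin (n+1) → ℂ))) (Fin.snoc x 0)
      = T *ᵥ (Fin.snoc x 0 : Fin (n+1) → ℂ)
        - c • (Fin.snoc x 0 : Fin (n+1) → ℂ) := rfl
  rw [h1, mulVec_snoc T hT x]
  funext i
  refine Fin.lastCases ?_ (fun i => ?_) i <;> simp

lemma snoc_pow {n : ℕ} (T : Matrix (Fin (n+1)) (Fin (n+1)) ℂ) (hT : T.BlockTriangular id)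
    (c : ℂ) (m : ℕ) (x : Fin n → ℂ) :
    ((T.mulVecLin - c • (1 : Module.End ℂ (Fin (n+1) → ℂ))) ^ m) (Fin.snoc x 0)
      = Fin.snoc ((((T.submatrix Fin.castSucc Fin.castSucc).mulVecLin
          - c • (1 : Module.End ℂ (Fin n → ℂ))) ^ m) x) (0:ℂ) := by
  induction m generalizing x with
  | zero => simp
  | succ m ih =>
    rw [pow_succ', pow_succ', Module.End.mul_apply, Module.End.mul_apply, ih x,
      snoc_step T hT c _]

lemma snoc_mem_maxGen {n : ℕ} (T : Matrix (Fin (n+1)) (Fin (n+1)) ℂ) (hT : T.BlockTriangular id)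
    (c : ℂ) (x : Fin n → ℂ)
    (hx : x ∈ Module.End.maxGenEigenspace ((T.submatrix Fin.castSucc Fin.castSucc).mulVecLin) c) :
    (Fin.snoc x 0 : Fin (n+1) → ℂ) ∈ Module.End.maxGenEigenspace (T.mulVecLin) c := by
  rw [Module.End.mem_maxGenEigenspace] at hx ⊢
  obtain ⟨m, hm⟩ := hx
  refine ⟨m, ?_⟩
  rw [snoc_pow T hT c m x, hm]
  funext i
  refine Fin.lastCases ?_ (fun i => ?_) i <;> simp

lemma submatrix_mul_tri {n : ℕ} (S R : Matrix (Fin (n+1)) (Fin (n+1)) ℂ)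
    (hR : R.BlockTriangular id) :
    (S * R).submatrix Fin.castSucc Fin.castSucc
      = S.submatrix Fin.castSucc Fin.castSucc * R.submatrix Fin.castSucc Fin.castSucc := by
  ext i j
  have hz : R (Fin.last n) (Fin.castSucc j) = 0 := hR (Fin.castSucc_lt_last j)
  simp [Matrix.mul_apply, Fin.sum_univ_castSucc, hz]

lemma commE {n : ℕ} {ι : Type*} (T : ι → Matrix (Fin n) (Fin n) ℂ)
    (hcomm : ∀ j k, T j * T k = T k * T j) (i j : ι) :
    Commute ((T i).mulVecLin) ((T j).mulVecLin) := by
  unfold Commute SemiconjBy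
  rw [Module.End.mul_eq_comp, Module.End.mul_eq_comp, ← Matrix.mulVecLin_mul,
    ← Matrix.mulVecLin_mul, hcomm i j]

lemma Jmap_apply (n : ℕ) (x : Fin n → ℂ) : Jmap n x = Fin.snoc x 0 := rfl

set_option maxHeartbeats 800000 in
lemma tri_count {ι : Type} : ∀ (n : ℕ) (T : ι → Matrix (Fin n) (Fin n) ℂ),
    (∀ j k, T j * T k = T k * T j) → (∀ k, (T k).BlockTriangular id) → ∀ χ : ι → ℂ,
    {i : Fin n | ∀ k, T k i i = χ k}.ncard ≤
      Module.finrank ℂ ↥(⨅ k, Module.End.maxGenEigenspace ((T k).mulVecLin) (χ k)) := by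
  intro n
  induction n with
  | zero =>
    intro T _ _ χ
    have : {i : Fin 0 | ∀ k, T k i i = χ k} = ∅ := by
      ext i; exact absurd i.2 (by omega)
    simp [this]
  | succ n ih =>
    intro T hcomm htri χ
    classical
    set T' : ι → Matrix (Fin n) (Fin n) ℂ :=
      fun k => (T k).submatrix Fin.castSucc Fin.castSucc with hT'
    have hcomm' : ∀ j k, T' j * T' k = T' k * T' j := by
      intro j k
      rw [hT']
      simp only
      rw [← submatrix_mul_tri _ _ (htri k), ← submatrix_mul_tri _ _ (htri j), hcomm j k]
    have htri' : ∀ k, (T' k).BlockTriangular id := by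
      intro k i j hij
      exact htri k (by simpa using hij)
    set N : Submodule ℂ (Fin (n+1) → ℂ) :=
      ⨅ k, Module.End.maxGenEigenspace ((T k).mulVecLin) (χ k) with hN
    set N' : Submodule ℂ (Fin n → ℂ) :=
      ⨅ k, Module.End.maxGenEigenspace ((T' k).mulVecLin) (χ k) with hN'
    have hmap : N'.map (Jmap n) ≤ N := by
      rintro - ⟨x, hx, rfl⟩
      rw [hN, Submodule.mem_iInf]
      intro k
      rw [Jmap_apply]
      exact snoc_mem_maxGen (T k) (htri k) (χ k) x ((Submodule.mem_iInf _).mp hx k)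
    have hrank' : finrank ℂ N' = finrank ℂ (N'.map (Jmap n)) :=
      (Submodule.equivMapOfInjective _ (Jmap_inj n) N').finrank_eq
    have hbase := ih T' hcomm' htri' χ
    have hsplit : {i : Fin (n+1) | ∀ k, T k i i = χ k}.ncard
        = {i : Fin n | ∀ k, T' k i i = χ k}.ncard
          + (if (∀ k, T k (Fin.last n) (Fin.last n) = χ k) then 1 else 0) := by
      rw [Set.ncard_eq_toFinset_card', Set.ncard_eq_toFinset_card',
        Set.toFinset_setOf, Set.toFinset_setOf, Finset.card_filter, Finset.card_filter,
        Fin.sum_univ_castSucc]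
      congr 1
    by_cases hlast : ∀ k, T k (Fin.last n) (Fin.last n) = χ k
    · -- last diagonal tuple matches χ
      rw [hsplit, if_pos hlast]
      set E : Submodule ℂ (Fin (n+1) → ℂ) :=
        LinearMap.ker (LinearMap.proj (R := ℂ) (φ := fun _ : Fin (n+1) => ℂ) (Fin.last n)) with hE
      have hEne : E ≠ ⊤ := by
        intro h
        have : (Pi.single (Fin.last n) 1 : Fin (n+1) → ℂ) ∈ E := h ▸ Submodule.mem_top
        rw [hE, LinearMap.mem_ker] at this
        simp at this
      have hq : ∀ k v, ((T k).mulVecLin) v - χ k • v ∈ E := by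
        intro k v
        rw [hE, LinearMap.mem_ker]
        have h1 : ((T k) *ᵥ v) (Fin.last n) = χ k * v (Fin.last n) := by
          have hz : ∀ j : Fin n, T k (Fin.last n) (Fin.castSucc j) = 0 :=
            fun j => htri k (Fin.castSucc_lt_last j)
          simp [Matrix.mulVec, dotProduct, Fin.sum_univ_castSucc, hz, hlast k]
        show ((T k).mulVecLin v - χ k • v) (Fin.last n) = 0
        simp [Matrix.mulVecLin_apply, h1]
      have hTop : ⨆ χ' : ι → ℂ, ⨅ k,
          Module.End.maxGenEigenspace ((fun k => (T k).mulVecLin) k) (χ' k) = ⊤ :=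
        Module.End.iSup_iInf_maxGenEigenspace_eq_top_of_iSup_maxGenEigenspace_eq_top_of_commute
          _ (fun i j _ => commE T hcomm i j)
          (fun k => Module.End.iSup_maxGenEigenspace_eq_top _)
      have hnot : ¬ N ≤ E := by
        have h0 := lemA (fun k => (T k).mulVecLin) χ hTop E hEne hq
        simpa [hN] using h0
      have hlt : N ⊓ E < N := by
        refine lt_of_le_of_ne inf_le_left fun h => hnot ?_
        rw [← h]; exact inf_le_right
      have h1 : N'.map (Jmap n) ≤ N ⊓ E := by
        refine le_inf hmap ?_
        rintro - ⟨x, _, rfl⟩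
        rw [hE, LinearMap.mem_ker, Jmap_apply]
        simp
      have hbase' : {i : Fin n | ∀ k, T' k i i = χ k}.ncard ≤ finrank ℂ N' := hbase
      calc {i : Fin n | ∀ k, T' k i i = χ k}.ncard + 1
          ≤ finrank ℂ (N'.map (Jmap n)) + 1 := by
            rw [← hrank']; exact Nat.add_le_add_right hbase' 1
        _ ≤ finrank ℂ ↥(N ⊓ E) + 1 := by
            have := Submodule.finrank_mono h1; omega
        _ ≤ finrank ℂ N := Submodule.finrank_lt_finrank_of_lt hlt
    · rw [hsplit, if_neg hlast, add_zero]
      calc {i : Fin n | ∀ k, T' k i i = χ k}.ncard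
          ≤ finrank ℂ N' := hbase
        _ = finrank ℂ (N'.map (Jmap n)) := hrank'
        _ ≤ finrank ℂ N := Submodule.finrank_mono hmap

lemma finrank_sum_le {V : Type*} [AddCommGroup V] [Module ℂ V] [FiniteDimensional ℂ V]
    {κ : Type*} (N : κ → Submodule ℂ V) (hInd : iSupIndep N) (s : Finset κ) :
    ∑ χ ∈ s, finrank ℂ (N χ) ≤ finrank ℂ ↥(s.sup N) := by
  classical
  induction s using Finset.induction_on with
  | empty => simp
  | @insert a s ha ih =>
    rw [Finset.sum_insert ha, Finset.sup_insert]
    have hdisj : Disjoint (N a) (s.sup N) := by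
      refine (hInd a).mono_right ?_
      refine Finset.sup_le fun b hb => ?_
      exact le_iSup_of_le b (le_iSup_of_le (by rintro rfl; exact ha hb) le_rfl)
    have h2 := Submodule.finrank_sup_add_finrank_inf_eq (N a) (s.sup N)
    rw [hdisj.eq_bot] at h2
    simp only [finrank_bot] at h2
    omega

set_option maxHeartbeats 1600000 in
/-- Semisimple partition: if `𝛌 = (λ₁,…,λ_d)` is a semisimple joint eigenvalue of multiplicity
`p` of a commuting family (its algebraic multiplicity, read off from a simultaneous unitary
triangularization, equals the dimension `p` of the common eigenspace), then there exist
`X = [X₁ X₂]`, `Y = [Y₁ Y₂]` with `X₁*X₁ = I_p`, `Y*X = Iₙ` (and `X` invertible), such that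
`Y*AₖX = diag(λₖ I_p, A₂₂^{(k)})` for all `k`. -/
theorem stmt_6 (n d p : ℕ) (hp : 0 < p) (hpn : p ≤ n)
    (A : Fin d → Matrix (Fin n) (Fin n) ℂ)
    (hcomm : ∀ j k, A j * A k = A k * A j)
    -- a simultaneous unitary triangularization defining the joint eigenvalues
    (U : Matrix (Fin n) (Fin n) ℂ) (hU : Uᴴ * U = 1 ∧ U * Uᴴ = 1)
    (htri : ∀ k, ((Uᴴ * A k * U).BlockTriangular (id : Fin n → Fin n)))
    (l : Fin d → ℂ)
    -- algebraic multiplicity of 𝛌 = l is p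
    (halg : (Finset.univ.filter (fun i : Fin n => ∀ k, (Uᴴ * A k * U) i i = l k)).card = p)
    -- geometric multiplicity of 𝛌 = l is p (semisimplicity)
    (hgeo : Module.finrank ℂ
      ↥(⨅ k, LinearMap.ker ((A k).mulVecLin - l k • LinearMap.id)) = p) :
    ∃ (X Y : Matrix (Fin n) (Fin p ⊕ Fin (n - p)) ℂ)
      (B : Fin d → Matrix (Fin (n - p)) (Fin (n - p)) ℂ),
      (X.submatrix id Sum.inl)ᴴ * X.submatrix id Sum.inl = 1 ∧
      Yᴴ * X = 1 ∧ X * Yᴴ = 1 ∧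
      ∀ k, Yᴴ * A k * X = Matrix.fromBlocks (l k • 1) 0 0 (B k) := by
  classical
  have hUl : U.mulVecLin ∘ₗ Uᴴ.mulVecLin = LinearMap.id := by
    rw [← Matrix.mulVecLin_mul, hU.2, Matrix.mulVecLin_one]
  have hUr : Uᴴ.mulVecLin ∘ₗ U.mulVecLin = LinearMap.id := by
    rw [← Matrix.mulVecLin_mul, hU.1, Matrix.mulVecLin_one]
  let e : (Fin n → ℂ) ≃ₗ[ℂ] (Fin n → ℂ) := LinearEquiv.ofLinear U.mulVecLin Uᴴ.mulVecLin hUl hUr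
  set f : Fin d → Module.End ℂ (Fin n → ℂ) := fun k => (A k).mulVecLin with hf
  set N : (Fin d → ℂ) → Submodule ℂ (Fin n → ℂ) :=
    fun χ => ⨅ k, Module.End.maxGenEigenspace (f k) (χ k) with hNdef
  have hTop : ⨆ χ, N χ = ⊤ :=
    Module.End.iSup_iInf_maxGenEigenspace_eq_top_of_iSup_maxGenEigenspace_eq_top_of_commute
      f (fun i j _ => commE A hcomm i j) (fun k => Module.End.iSup_maxGenEigenspace_eq_top _)
  have hInd : iSupIndep N :=
    Module.End.independent_iInf_maxGenEigenspace_of_forall_mapsTo f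
      (fun i j φ => Module.End.mapsTo_maxGenEigenspace_of_comm (commE A hcomm j i) φ)
  set T : Fin d → Matrix (Fin n) (Fin n) ℂ := fun k => Uᴴ * A k * U with hTdef
  have hkeyU : ∀ M M' : Matrix (Fin n) (Fin n) ℂ,
      (Uᴴ * M * U) * (Uᴴ * M' * U) = Uᴴ * (M * M') * U := by
    intro M M'
    simp only [Matrix.mul_assoc]
    rw [← Matrix.mul_assoc U Uᴴ (M' * U), hU.2, Matrix.one_mul]
  have hcommT : ∀ j k, T j * T k = T k * T j := by
    intro j k
    rw [hTdef]
    simp only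
    rw [hkeyU, hkeyU, hcomm j k]
  have hTlin : ∀ k, (T k).mulVecLin = Uᴴ.mulVecLin ∘ₗ (f k ∘ₗ U.mulVecLin) := by
    intro k
    rw [hTdef, hf]
    simp only
    rw [Matrix.mulVecLin_mul, Matrix.mulVecLin_mul]
    rfl
  have hkey : ∀ (k : Fin d) (c : ℂ) (m : ℕ) (x : Fin n → ℂ),
      (((T k).mulVecLin - c • (1 : Module.End ℂ (Fin n → ℂ))) ^ m) x
        = e.symm (((f k - c • (1 : Module.End ℂ (Fin n → ℂ))) ^ m) (e x)) := by
    intro k c m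
    induction m with
    | zero => intro x; simp
    | succ m ih =>
      intro x
      have hstep : ∀ y : Fin n → ℂ, ((T k).mulVecLin - c • (1 : Module.End ℂ (Fin n → ℂ))) y
          = e.symm ((f k - c • (1 : Module.End ℂ (Fin n → ℂ))) (e y)) := by
        intro y
        have h1 : (T k).mulVecLin y = e.symm (f k (e y)) := by rw [hTlin k]; rfl
        calc ((T k).mulVecLin - c • (1 : Module.End ℂ (Fin n → ℂ))) y
            = (T k).mulVecLin y - c • y := rfl
          _ = e.symm (f k (e y)) - c • (e.symm (e y)) := by rw [h1, e.symm_apply_apply]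
          _ = e.symm ((f k - c • (1 : Module.End ℂ (Fin n → ℂ))) (e y)) := by
              have h2 : (f k - c • (1 : Module.End ℂ (Fin n → ℂ))) (e y)
                  = f k (e y) - c • (e y) := rfl
              rw [h2, _root_.map_sub, _root_.map_smul]
      rw [pow_succ, pow_succ, Module.End.mul_apply, Module.End.mul_apply,
        ih (((T k).mulVecLin - c • (1 : Module.End ℂ (Fin n → ℂ))) x)]
      congr 1
      congr 1
      rw [hstep x, e.apply_symm_apply]
  have hcomap : ∀ χ : Fin d → ℂ,
      (⨅ k, Module.End.maxGenEigenspace ((T k).mulVecLin) (χ k))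
        = (N χ).comap (e : (Fin n → ℂ) →ₗ[ℂ] (Fin n → ℂ)) := by
    intro χ
    ext x
    rw [Submodule.mem_comap, hNdef]
    simp only [Submodule.mem_iInf, Module.End.mem_maxGenEigenspace, LinearEquiv.coe_coe]
    refine forall_congr' fun k => exists_congr fun m => ?_
    rw [hkey k (χ k) m x, LinearEquiv.map_eq_zero_iff]
  have hrank : ∀ χ : Fin d → ℂ,
      finrank ℂ ↥(⨅ k, Module.End.maxGenEigenspace ((T k).mulVecLin) (χ k))
        = finrank ℂ (N χ) := by
    intro χ
    rw [hcomap χ, Submodule.comap_equiv_eq_map_symm]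
    exact LinearEquiv.finrank_map_eq e.symm (N χ)
  have hcnt : ∀ χ : Fin d → ℂ, {i : Fin n | ∀ k, T k i i = χ k}.ncard ≤ finrank ℂ (N χ) :=
    fun χ => le_of_le_of_eq (tri_count n T hcommT htri χ) (hrank χ)
  -- counting
  have hPcard : (Finset.univ.filter (fun i : Fin n => ∀ k, T k i i = l k)).card = p := by
    have h0 : Finset.univ.filter (fun i : Fin n => ∀ k, T k i i = l k)
        = Finset.univ.filter (fun i : Fin n => ∀ k, (Uᴴ * A k * U) i i = l k) := by
      ext i
      simp only [Finset.mem_filter, hTdef]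
    rw [h0, halg]
  set t : Finset (Fin n) := Finset.univ.filter (fun i => ¬ ∀ k, T k i i = l k) with ht
  have hcard_t : t.card = n - p := by
    have h0 := Finset.card_filter_add_card_filter_not
      (s := (Finset.univ : Finset (Fin n))) (p := fun i => ∀ k, T k i i = l k)
    rw [hPcard] at h0
    simp only [Finset.card_univ, Fintype.card_fin] at h0
    rw [ht]
    omega
  set tup : Fin n → (Fin d → ℂ) := fun i k => T k i i with htup
  set s : Finset (Fin d → ℂ) := t.image tup with hs
  have hsum : t.card ≤ ∑ χ ∈ s, finrank ℂ (N χ) := by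
    rw [Finset.card_eq_sum_card_fiberwise
      (f := tup) (t := s) (fun i hi => Finset.mem_image_of_mem tup hi)]
    refine Finset.sum_le_sum fun χ _ => ?_
    refine le_trans ?_ (hcnt χ)
    rw [Set.ncard_eq_toFinset_card', Set.toFinset_setOf]
    apply Finset.card_le_card
    intro i hi
    simp only [Finset.mem_filter] at hi ⊢
    exact ⟨Finset.mem_univ i, fun k => by rw [← hi.2]⟩
  set W : Submodule ℂ (Fin n → ℂ) := ⨆ (χ : Fin d → ℂ) (_ : χ ≠ l), N χ with hW
  have hsupW : s.sup N ≤ W := by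
    refine Finset.sup_le fun χ hχ => ?_
    obtain ⟨i, hi, rfl⟩ := Finset.mem_image.mp hχ
    have hne : tup i ≠ l := by
      rw [ht, Finset.mem_filter] at hi
      intro hcon
      exact hi.2 fun k => congrFun hcon k
    exact le_iSup_of_le (tup i) (le_iSup_of_le hne le_rfl)
  have hWrank : n - p ≤ finrank ℂ W := by
    calc n - p = t.card := hcard_t.symm
      _ ≤ ∑ χ ∈ s, finrank ℂ (N χ) := hsum
      _ ≤ finrank ℂ ↥(s.sup N) := finrank_sum_le N hInd s
      _ ≤ finrank ℂ W := Submodule.finrank_mono hsupW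
  set Vs : Submodule ℂ (Fin n → ℂ) :=
    ⨅ k, LinearMap.ker ((A k).mulVecLin - l k • LinearMap.id) with hVs
  have hVsub : Vs ≤ N l := by
    rw [hVs, hNdef]
    refine le_iInf fun k => le_trans (iInf_le _ k) ?_
    intro x hx
    rw [LinearMap.mem_ker] at hx
    rw [Module.End.mem_maxGenEigenspace]
    exact ⟨1, by rw [pow_one]; exact hx⟩
  have hsupNl : N l ⊔ W = ⊤ := by
    rw [eq_top_iff, ← hTop]
    refine iSup_le fun χ => ?_
    by_cases hχ : χ = l
    · subst hχ; exact le_sup_left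
    · exact le_sup_of_le_right (le_iSup_of_le χ (le_iSup_of_le hχ le_rfl))
  have hdisjNl : Disjoint (N l) W := hInd l
  have hrankNlW : finrank ℂ (N l) + finrank ℂ W = n := by
    have h1 := Submodule.finrank_sup_add_finrank_inf_eq (N l) W
    rw [hsupNl, hdisjNl.eq_bot] at h1
    have h2 : finrank ℂ (⊤ : Submodule ℂ (Fin n → ℂ)) = n := by simp
    rw [finrank_bot, h2] at h1
    omega
  have hVeq : Vs = N l := by
    refine Submodule.eq_of_le_of_finrank_le hVsub ?_
    rw [hgeo]
    omega
  have hrkV : finrank ℂ Vs = p := hgeo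
  have hrkW : finrank ℂ W = n - p := by
    rw [← hVeq] at hrankNlW
    omega
  have hcompl : IsCompl Vs W := by
    constructor
    · exact hVeq ▸ hdisjNl
    · rw [codisjoint_iff]; exact hVeq ▸ hsupNl
  have hWinv : ∀ k, ∀ x ∈ W, f k x ∈ W := by
    intro k x hx
    have hmap : Submodule.map (f k) W ≤ W := by
      rw [hW, Submodule.map_iSup]
      refine iSup_le fun χ => ?_
      rw [Submodule.map_iSup]
      refine iSup_le fun hχ => ?_
      refine le_trans ?_ (le_iSup_of_le χ (le_iSup_of_le hχ le_rfl))
      rw [Submodule.map_le_iff_le_comap]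
      intro y hy
      rw [Submodule.mem_comap]
      have hy' : y ∈ ⨅ j, (f j).maxGenEigenspace (χ j) := hy
      rw [Submodule.mem_iInf] at hy'
      show (f k) y ∈ ⨅ j, (f j).maxGenEigenspace (χ j)
      refine (Submodule.mem_iInf _).mpr fun j => ?_
      exact Module.End.mapsTo_maxGenEigenspace_of_comm (commE A hcomm j k) (χ j) (hy' j)
    exact hmap ⟨x, hx, rfl⟩
  have hVeig : ∀ k, ∀ x ∈ Vs, (A k) *ᵥ x = l k • x := by
    intro k x hx
    rw [hVs, Submodule.mem_iInf] at hx
    have h1 := hx k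
    rw [LinearMap.mem_ker, LinearMap.sub_apply, LinearMap.smul_apply, LinearMap.id_apply,
      sub_eq_zero] at h1
    exact h1
  -- bases
  let eL : EuclideanSpace ℂ (Fin n) ≃ₗ[ℂ] (Fin n → ℂ) := WithLp.linearEquiv 2 ℂ (Fin n → ℂ)
  let V' : Submodule ℂ (EuclideanSpace ℂ (Fin n)) := Vs.map eL.symm.toLinearMap
  let eVV' : Vs ≃ₗ[ℂ] V' := eL.symm.submoduleMap Vs
  have hrkV' : finrank ℂ V' = p := by rw [← hrkV]; exact eVV'.finrank_eq.symm
  let ob : OrthonormalBasis (Fin p) ℂ V' := (stdOrthonormalBasis ℂ V').reindex (finCongr hrkV')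
  let bV : Basis (Fin p) ℂ Vs := ob.toBasis.map eVV'.symm
  have hbV : ∀ a i, (bV a : Fin n → ℂ) i = ((ob a : EuclideanSpace ℂ (Fin n)) : Fin n → ℂ) i := by
    intro a i
    simp only [bV, Basis.map_apply, OrthonormalBasis.coe_toBasis]
    rfl
  let bW : Basis (Fin (n - p)) ℂ W := Module.finBasisOfFinrankEq ℂ W hrkW
  let bFull : Basis (Fin p ⊕ Fin (n - p)) ℂ (Fin n → ℂ) :=
    (bV.prod bW).map (Submodule.prodEquivOfIsCompl Vs W hcompl)
  have hbFull_inl : ∀ a, bFull (Sum.inl a) = (bV a : Fin n → ℂ) := by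
    intro a
    simp [bFull, Basis.prod_apply, Submodule.coe_prodEquivOfIsCompl]
  have hbFull_inr : ∀ b, bFull (Sum.inr b) = (bW b : Fin n → ℂ) := by
    intro b
    simp [bFull, Basis.prod_apply, Submodule.coe_prodEquivOfIsCompl]
  let Pb : Basis (Fin n) ℂ (Fin n → ℂ) := Pi.basisFun ℂ (Fin n)
  let X : Matrix (Fin n) (Fin p ⊕ Fin (n - p)) ℂ := Matrix.of fun i q => bFull q i
  have hX : X = Pb.toMatrix ⇑bFull := by
    ext i q
    rw [Basis.toMatrix_apply]
    simp [Pb, X]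
  let Z : Matrix (Fin p ⊕ Fin (n - p)) (Fin n) ℂ := bFull.toMatrix ⇑Pb
  have hZX : Z * X = 1 := by rw [hX]; exact Basis.toMatrix_mul_toMatrix_flip bFull Pb
  have hXZ : X * Z = 1 := by rw [hX]; exact Basis.toMatrix_mul_toMatrix_flip Pb bFull
  let B : Fin d → Matrix (Fin (n - p)) (Fin (n - p)) ℂ :=
    fun k => LinearMap.toMatrix bW bW ((f k).restrict (hWinv k))
  have hAX : ∀ k, A k * X
      = X * Matrix.fromBlocks (l k • (1 : Matrix (Fin p) (Fin p) ℂ)) 0 0 (B k) := by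
    intro k
    ext i q
    rw [Matrix.mul_apply, Matrix.mul_apply]
    have hL : ∑ j, A k i j * X j q = ((A k) *ᵥ (bFull q)) i := rfl
    rw [hL]
    cases q with
    | inl a =>
      have hmem : (bV a : Fin n → ℂ) ∈ Vs := (bV a).2
      rw [hbFull_inl a, hVeig k _ hmem, Fintype.sum_sum_type]
      simp only [Matrix.fromBlocks_apply₁₁, Matrix.fromBlocks_apply₂₁, Matrix.zero_apply,
        mul_zero, Finset.sum_const_zero, add_zero, Matrix.smul_apply, Matrix.one_apply,
        smul_eq_mul, mul_ite, mul_one, Finset.sum_ite_eq', Finset.mem_univ, if_true]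
      simp [X, hbFull_inl a, mul_comm]
    | inr b =>
      have hrepr : (f k) (bW b : Fin n → ℂ)
          = ∑ b', (B k) b' b • (bW b' : Fin n → ℂ) := by
        have h1 : ((f k).restrict (hWinv k)) (bW b) = ∑ b', (B k) b' b • bW b' := by
          conv_lhs => rw [← Basis.sum_repr bW (((f k).restrict (hWinv k)) (bW b))]
          refine Finset.sum_congr rfl fun b' _ => ?_
          simp only [B, LinearMap.toMatrix_apply]
        have h2 := congrArg (Submodule.subtype W) h1
        simpa [LinearMap.restrict_apply] using h2
      rw [hbFull_inr b]
      have hLv : (A k) *ᵥ (bW b : Fin n → ℂ) = (f k) (bW b : Fin n → ℂ) := rfl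
      rw [hLv, hrepr, Fintype.sum_sum_type]
      simp only [Matrix.fromBlocks_apply₁₂, Matrix.fromBlocks_apply₂₂,
        Matrix.zero_apply, mul_zero, Finset.sum_const_zero, zero_add]
      rw [Finset.sum_apply]
      refine Finset.sum_congr rfl fun b' _ => ?_
      simp [X, hbFull_inr b', mul_comm]
  refine ⟨X, Zᴴ, B, ?_, ?_, ?_, ?_⟩
  · ext a b
    rw [Matrix.mul_apply, Matrix.one_apply]
    have h1 := (orthonormal_iff_ite.mp ob.orthonormal) a b
    rw [Submodule.coe_inner, PiLp.inner_apply] at h1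
    simp only [RCLike.inner_apply] at h1
    rw [← h1]
    refine Finset.sum_congr rfl fun i _ => ?_
    simp [Matrix.conjTranspose_apply, Matrix.submatrix_apply, X, hbFull_inl, hbV, mul_comm]
  · rw [Matrix.conjTranspose_conjTranspose]; exact hZX
  · rw [Matrix.conjTranspose_conjTranspose]; exact hXZ
  · intro k
    rw [Matrix.conjTranspose_conjTranspose, Matrix.mul_assoc, hAX k, ← Matrix.mul_assoc,
      hZX, Matrix.one_mul]
end

section
/- A commuting family 𝒜 = {A₁,…,A_d} of n×n complex matrices is simultaneously diagonalizable if and only if every joint eigenvalue of 𝒜 is semisimple. -/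
open Matrix Module

/-- finrank of sup of a `SupIndep` finite family of submodules is the sum of finranks. -/
lemma aux_finrank_sup {K V : Type*} [Field K] [AddCommGroup V] [Module K V]
    [FiniteDimensional K V] {ι : Type*} [DecidableEq ι] (s : Finset ι) (p : ι → Submodule K V)
    (h : s.SupIndep p) :
    Module.finrank K ↥(s.sup p) = ∑ χ ∈ s, Module.finrank K ↥(p χ) := by
  induction s using Finset.induction_on with
  | empty => simp
  | @insert a s ha ih =>
    have hd : Disjoint (p a) (s.sup p) := by
      have := (Finset.supIndep_iff_disjoint_erase.mp h) a (Finset.mem_insert_self a s)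
      rwa [Finset.erase_insert ha] at this
    rw [Finset.sup_insert, Finset.sum_insert ha, ← ih (h.subset (Finset.subset_insert a s))]
    have h2 := Submodule.finrank_sup_add_finrank_inf_eq (p a) (s.sup p)
    rw [hd.eq_bot] at h2
    simpa using h2

/-- Key upper bound: the joint eigenspace of a commuting upper-triangular family has
dimension at most the number of diagonal positions carrying the given joint eigenvalue. -/
lemma aux_tri_le {n d : ℕ} (T : Fin d → Matrix (Fin n) (Fin n) ℂ)
    (htri : ∀ k, (T k).BlockTriangular (id : Fin n → Fin n)) (χ : Fin d → ℂ) :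
    Module.finrank ℂ
        ↥(⨅ k, LinearMap.ker ((T k).mulVecLin - χ k • (LinearMap.id : (Fin n → ℂ) →ₗ[ℂ] (Fin n → ℂ)))) ≤
      (Finset.univ.filter (fun j : Fin n => ∀ k, T k j j = χ k)).card := by
  classical
  set E := ⨅ k, LinearMap.ker ((T k).mulVecLin - χ k • (LinearMap.id : (Fin n → ℂ) →ₗ[ℂ] (Fin n → ℂ))) with hE
  set s := Finset.univ.filter (fun j : Fin n => ∀ k, T k j j = χ k) with hs
  let φ : ↥E →ₗ[ℂ] (↥s → ℂ) := LinearMap.pi (fun j => (LinearMap.proj j.1).comp E.subtype)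
  have hinj : Function.Injective φ := by
    rw [← LinearMap.ker_eq_bot, Submodule.eq_bot_iff]
    rintro ⟨x, hx⟩ hker
    have hker' : ∀ j : Fin n, j ∈ s → x j = 0 := by
      intro j hj
      exact congrFun hker ⟨j, hj⟩
    ext1
    show x = 0
    by_contra h0
    obtain ⟨j0, hj0⟩ : ∃ j, x j ≠ 0 := Function.ne_iff.mp h0
    set t := Finset.univ.filter (fun j : Fin n => x j ≠ 0) with ht
    have htne : t.Nonempty := ⟨j0, by simp [ht, hj0]⟩
    set j := t.max' htne with hjdef
    have hjt : j ∈ t := t.max'_mem htne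
    have hjne : x j ≠ 0 := by simpa [ht] using hjt
    have hjs : j ∈ s := by
      simp only [hs, Finset.mem_filter, Finset.mem_univ, true_and]
      intro k
      have hxk : (T k) *ᵥ x = χ k • x := by
        have := (Submodule.mem_iInf _).mp hx k
        rw [LinearMap.mem_ker, LinearMap.sub_apply, sub_eq_zero] at this
        simpa using this
      have hxkj : ∑ l, T k j l * x l = χ k * x j := by
        have := congrFun hxk j
        simpa [Matrix.mulVec, dotProduct] using this
      have hsum : ∑ l, T k j l * x l = T k j j * x j := by
        refine Finset.sum_eq_single j (fun l _ hl => ?_) (by simp)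
        rcases lt_or_gt_of_ne hl with h | h
        · rw [htri k (show (id l : Fin n) < id j from h), zero_mul]
        · have : x l = 0 := by
            by_contra hxl
            exact absurd (t.le_max' l (by simp [ht, hxl])) (not_le.mpr h)
          rw [this, mul_zero]
      exact mul_right_cancel₀ hjne (hsum.symm.trans hxkj)
    exact hjne (hker' j hjs)
  calc Module.finrank ℂ ↥E ≤ Module.finrank ℂ (↥s → ℂ) :=
        LinearMap.finrank_le_finrank_of_injective hinj
    _ = s.card := by rw [Module.finrank_fintype_fun_eq_card, Fintype.card_coe]

/-- Transfer of joint eigenspaces under unitary conjugation. -/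
lemma aux_conj_finrank {n : ℕ} {d : ℕ} (U : Matrix (Fin n) (Fin n) ℂ)
    (h1 : Uᴴ * U = 1) (h2 : U * Uᴴ = 1) (A T : Fin d → Matrix (Fin n) (Fin n) ℂ)
    (hT : ∀ k, T k = Uᴴ * A k * U) (χ : Fin d → ℂ) :
    Module.finrank ℂ
        ↥(⨅ k, LinearMap.ker ((A k).mulVecLin - χ k • (LinearMap.id : (Fin n → ℂ) →ₗ[ℂ] (Fin n → ℂ)))) =
      Module.finrank ℂ
        ↥(⨅ k, LinearMap.ker ((T k).mulVecLin - χ k • (LinearMap.id : (Fin n → ℂ) →ₗ[ℂ] (Fin n → ℂ)))) := by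
  let u : (Fin n → ℂ) ≃ₗ[ℂ] (Fin n → ℂ) :=
    LinearEquiv.ofLinear U.mulVecLin (Uᴴ).mulVecLin
      (by rw [← Matrix.mulVecLin_mul, h2, Matrix.mulVecLin_one])
      (by rw [← Matrix.mulVecLin_mul, h1, Matrix.mulVecLin_one])
  have hmap : (⨅ k, LinearMap.ker ((A k).mulVecLin - χ k • (LinearMap.id : (Fin n → ℂ) →ₗ[ℂ] (Fin n → ℂ)))) =
      Submodule.map (u : (Fin n → ℂ) →ₗ[ℂ] (Fin n → ℂ))
        (⨅ k, LinearMap.ker ((T k).mulVecLin - χ k • (LinearMap.id : (Fin n → ℂ) →ₗ[ℂ] (Fin n → ℂ)))) := by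
    ext x
    rw [Submodule.mem_map_equiv, Submodule.mem_iInf, Submodule.mem_iInf]
    have hus : u.symm x = Uᴴ *ᵥ x := rfl
    refine forall_congr' fun k => ?_
    rw [LinearMap.mem_ker, LinearMap.mem_ker, LinearMap.sub_apply, LinearMap.sub_apply,
      sub_eq_zero, sub_eq_zero]
    simp only [Matrix.mulVecLin_apply, LinearMap.smul_apply, LinearMap.id_apply, hus, hT k]
    constructor
    · intro h
      have h' := congrArg (fun v => (Uᴴ : Matrix (Fin n) (Fin n) ℂ) *ᵥ v) h
      simp only [Matrix.mulVec_mulVec, Matrix.mulVec_smul] at h'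
      rw [Matrix.mulVec_mulVec, mul_assoc (Uᴴ * A k) U Uᴴ, h2, mul_one]
      exact h'
    · intro h
      have h' := congrArg (fun v => U *ᵥ v) h
      simp only [Matrix.mulVec_mulVec, Matrix.mulVec_smul] at h'
      rw [show U * (Uᴴ * A k * U * Uᴴ) = A k by
        rw [← mul_assoc, ← mul_assoc, ← mul_assoc, h2, one_mul, mul_assoc, h2, mul_one]] at h'
      rw [h2, Matrix.one_mulVec] at h'
      exact h'
    -- may need fixing
  rw [hmap, LinearEquiv.finrank_map_eq]

theorem key (n d : ℕ) (A T : Fin d → Matrix (Fin n) (Fin n) ℂ)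
    (hcomm : ∀ j k, A j * A k = A k * A j)
    (U : Matrix (Fin n) (Fin n) ℂ) (h1 : Uᴴ * U = 1) (h2 : U * Uᴴ = 1)
    (hT : ∀ k, T k = Uᴴ * A k * U)
    (htri : ∀ k, ((T k).BlockTriangular (id : Fin n → Fin n))) :
    (∃ X : Matrix (Fin n) (Fin n) ℂ, IsUnit X ∧ ∀ k, (X⁻¹ * A k * X).IsDiag) ↔
      ∀ i : Fin n,
        (Finset.univ.filter (fun j : Fin n => ∀ k, T k j j = T k i i)).card =
          Module.finrank ℂ
            ↥(⨅ k, LinearMap.ker ((A k).mulVecLin - (T k i i) • LinearMap.id)) := by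
  classical
  set lam : Fin n → (Fin d → ℂ) := fun j k => T k j j with hlam
  set E : (Fin d → ℂ) → Submodule ℂ (Fin n → ℂ) :=
    fun χ => ⨅ k, LinearMap.ker ((A k).mulVecLin - χ k • LinearMap.id) with hEdef
  set m : (Fin d → ℂ) → ℕ :=
    fun χ => (Finset.univ.filter fun j => lam j = χ).card with hmdef
  set S : Finset (Fin d → ℂ) := Finset.image lam Finset.univ with hS
  have hfilter : ∀ i : Fin n,
      (Finset.univ.filter (fun j : Fin n => ∀ k, T k j j = T k i i)) =
        Finset.univ.filter (fun j => lam j = lam i) := by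
    intro i; ext j
    simp [hlam, funext_iff]
  have hmem_E : ∀ (χ : Fin d → ℂ) (x : Fin n → ℂ),
      x ∈ E χ ↔ ∀ k, A k *ᵥ x = χ k • x := by
    intro χ x
    rw [hEdef, Submodule.mem_iInf]
    refine forall_congr' fun k => ?_
    rw [LinearMap.mem_ker, LinearMap.sub_apply, sub_eq_zero]
    simp [Matrix.mulVecLin_apply]
  -- upper bound : finrank (E χ) ≤ m χ
  have hm_le : ∀ χ, Module.finrank ℂ ↥(E χ) ≤ m χ := by
    intro χ
    rw [hEdef]
    calc Module.finrank ℂ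
          ↥(⨅ k, LinearMap.ker ((A k).mulVecLin - χ k • LinearMap.id)) =
        Module.finrank ℂ
          ↥(⨅ k, LinearMap.ker ((T k).mulVecLin - χ k • LinearMap.id)) :=
        aux_conj_finrank U h1 h2 A T hT χ
      _ ≤ (Finset.univ.filter (fun j : Fin n => ∀ k, T k j j = χ k)).card :=
        aux_tri_le T htri χ
      _ = m χ := by
        rw [hmdef]; congr 1; ext j; simp [hlam, funext_iff]
  have hsum_m : ∑ χ ∈ S, m χ = n := by
    have h := Finset.card_eq_sum_card_image lam (Finset.univ : Finset (Fin n))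
    rw [Finset.card_univ, Fintype.card_fin] at h
    exact h.symm
  have hm_pos : ∀ χ, m χ ≠ 0 → χ ∈ S := by
    intro χ hχ
    rw [hmdef] at hχ
    obtain ⟨j, hj⟩ := Finset.card_ne_zero.mp hχ
    rw [Finset.mem_filter] at hj
    rw [hS]
    exact Finset.mem_image.mpr ⟨j, Finset.mem_univ j, hj.2⟩
  constructor
  · -- diagonalizable → semisimple
    rintro ⟨X, hX, hdiag⟩
    have hdet : IsUnit X.det := (Matrix.isUnit_iff_isUnit_det X).mp hX
    set mu : Fin n → (Fin d → ℂ) := fun j k => (X⁻¹ * A k * X) j j with hmu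
    set c : Fin n → (Fin n → ℂ) := fun j i => X i j with hcdef
    have hAX : ∀ k, A k * X = X * (X⁻¹ * A k * X) := by
      intro k
      rw [← Matrix.mul_assoc, ← Matrix.mul_assoc, Matrix.mul_nonsing_inv _ hdet,
        Matrix.one_mul]
    have hc : ∀ j k, A k *ᵥ c j = mu j k • c j := by
      intro j k
      funext i
      have e1 : (A k *ᵥ c j) i = (A k * X) i j := by
        simp [hcdef, Matrix.mulVec, dotProduct, Matrix.mul_apply]
      rw [e1, hAX k, Matrix.mul_apply]
      rw [Finset.sum_eq_single j (fun l _ hl => by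
        rw [hdiag k hl, mul_zero]) (by simp)]
      simp [hmu, hcdef, mul_comm]
    have hcmem : ∀ j, c j ∈ E (mu j) := by
      intro j
      rw [hmem_E]
      exact fun k => hc j k
    have hcli : LinearIndependent ℂ c := by
      have hinj : Function.Injective X.mulVecLin := by
        intro v w h
        have h' := congrArg (fun z => X⁻¹ *ᵥ z) h
        simpa [Matrix.mulVecLin_apply, Matrix.mulVec_mulVec,
          Matrix.nonsing_inv_mul _ hdet, Matrix.one_mulVec] using h'
      have hli := (Pi.basisFun ℂ (Fin n)).linearIndependent.map' X.mulVecLin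
        (LinearMap.ker_eq_bot.mpr hinj)
      have hceq : c = fun j => X.mulVecLin ((Pi.basisFun ℂ (Fin n)) j) := by
        funext j
        funext i
        simp [hcdef, Matrix.mulVecLin_apply, Pi.basisFun_apply]
      rw [hceq]
      exact hli
    have hcnt_le : ∀ χ, (Finset.univ.filter fun j => mu j = χ).card ≤
        Module.finrank ℂ ↥(E χ) := by
      intro χ
      have hv : LinearIndependent ℂ
          (fun j : {j : Fin n // mu j = χ} => (⟨c j.1, by have h := hcmem j.1; rwa [j.2] at h⟩ : ↥(E χ))) := by
        apply LinearIndependent.of_comp (E χ).subtype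
        exact hcli.comp Subtype.val Subtype.val_injective
      have := hv.fintype_card_le_finrank
      rwa [Fintype.card_subtype] at this
    have hS'sub : Finset.image mu Finset.univ ⊆ S := by
      intro χ hχ
      obtain ⟨j, -, hj⟩ := Finset.mem_image.mp hχ
      apply hm_pos
      have h1' : 1 ≤ (Finset.univ.filter fun j' => mu j' = χ).card :=
        Finset.card_pos.mpr ⟨j, by simp [hj]⟩
      have := (h1'.trans (hcnt_le χ)).trans (hm_le χ)
      omega
    have hsum_cnt : ∑ χ ∈ S, (Finset.univ.filter fun j => mu j = χ).card = n := by
      rw [← Finset.sum_subset hS'sub (fun χ _ hnot => ?_)]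
      · have h := Finset.card_eq_sum_card_image mu (Finset.univ : Finset (Fin n))
        rw [Finset.card_univ, Fintype.card_fin] at h
        exact h.symm
      · rw [Finset.card_eq_zero, Finset.filter_eq_empty_iff]
        intro j _
        exact fun hj => hnot (Finset.mem_image.mpr ⟨j, Finset.mem_univ j, hj⟩)
    have hterm : ∀ χ ∈ S, (Finset.univ.filter fun j => mu j = χ).card = m χ := by
      refine (Finset.sum_eq_sum_iff_of_le fun χ _ => ((hcnt_le χ).trans (hm_le χ))).mp ?_
      rw [hsum_cnt, hsum_m]
    have hfE : ∀ χ ∈ S, Module.finrank ℂ ↥(E χ) = m χ := by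
      intro χ hχ
      refine le_antisymm (hm_le χ) ?_
      rw [← hterm χ hχ]
      exact hcnt_le χ
    intro i
    rw [hfilter i]
    exact (hfE (lam i) (Finset.mem_image.mpr ⟨i, Finset.mem_univ i, rfl⟩)).symm
  · -- semisimple → diagonalizable
    intro hsemi
    have hfE : ∀ χ ∈ S, Module.finrank ℂ ↥(E χ) = m χ := by
      intro χ hχ
      obtain ⟨i, -, rfl⟩ := Finset.mem_image.mp hχ
      have h := hsemi i
      rw [hfilter i] at h
      exact h.symm
    have hcomm' : ∀ i j : Fin d, Commute ((A i).mulVecLin) ((A j).mulVecLin) := by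
      intro i j
      show _ * _ = _ * _
      rw [Module.End.mul_eq_comp, Module.End.mul_eq_comp, ← Matrix.mulVecLin_mul,
        ← Matrix.mulVecLin_mul, hcomm]
    have hindep : iSupIndep E := by
      have hGind := Module.End.independent_iInf_maxGenEigenspace_of_forall_mapsTo
        (fun k => (A k).mulVecLin)
        (fun i j φ => Module.End.mapsTo_maxGenEigenspace_of_comm (hcomm' j i) φ)
      refine hGind.mono fun χ => ?_
      rw [hEdef]
      refine iInf_mono fun k => ?_
      intro x hx
      rw [LinearMap.mem_ker] at hx
      rw [Module.End.mem_maxGenEigenspace]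
      refine ⟨1, ?_⟩
      rw [pow_one]
      simpa [LinearMap.sub_apply, Module.End.one_eq_id] using hx
    have hsupfr : Module.finrank ℂ ↥(S.sup E) = n := by
      rw [aux_finrank_sup S E (hindep.supIndep' S), Finset.sum_congr rfl hfE, hsum_m]
    have htop : S.sup E = ⊤ := by
      apply Submodule.eq_top_of_finrank_eq
      rw [hsupfr, Module.finrank_fintype_fun_eq_card, Fintype.card_fin]
    have hspan : Submodule.span ℂ (⋃ χ ∈ S, (E χ : Set (Fin n → ℂ))) = ⊤ := by
      rw [Submodule.span_iUnion₂]
      simp only [Submodule.span_eq]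
      rw [← Finset.sup_eq_iSup]
      exact htop
    obtain ⟨b, hb_sub, hb_span, hb_li⟩ :=
      exists_linearIndependent ℂ (⋃ χ ∈ S, (E χ : Set (Fin n → ℂ)))
    rw [hspan] at hb_span
    have : Finite ↥b := hb_li.finite
    have : Fintype ↥b := Fintype.ofFinite _
    let B : Basis ↥b ℂ (Fin n → ℂ) := Basis.mk hb_li (by
      rw [Subtype.range_coe, hb_span])
    have hcard : Fintype.card ↥b = n := by
      have h := Module.finrank_eq_card_basis B
      rw [Module.finrank_fintype_fun_eq_card, Fintype.card_fin] at h
      exact h.symm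
    let e : Fin n ≃ ↥b := (Fintype.equivFinOfCardEq hcard).symm
    let B' : Basis (Fin n) ℂ (Fin n → ℂ) := B.reindex e.symm
    have hB' : ∀ j, B' j = ((e j : ↥b) : Fin n → ℂ) := by
      intro j
      rw [Module.Basis.reindex_apply, Equiv.symm_symm, Basis.mk_apply]
    have hB'mem : ∀ j, ∃ χ ∈ S, B' j ∈ E χ := by
      intro j
      have hm' : ((e j : ↥b) : Fin n → ℂ) ∈ ⋃ χ ∈ S, (E χ : Set (Fin n → ℂ)) :=
        hb_sub (e j).2
      rw [← hB' j] at hm'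
      obtain ⟨χ, hχ, hx⟩ := Set.mem_iUnion₂.mp hm'
      exact ⟨χ, hχ, hx⟩
    choose mu hmuS hmu using hB'mem
    set X : Matrix (Fin n) (Fin n) ℂ := Matrix.of fun i j => B' j i with hXdef
    have hXeq : X = (Pi.basisFun ℂ (Fin n)).toMatrix B' := by
      ext i j
      rw [Basis.toMatrix_apply, Pi.basisFun_repr]
      rfl
    have hXunit : IsUnit X := by
      rw [hXeq]
      have := Basis.invertibleToMatrix (Pi.basisFun ℂ (Fin n)) B'
      exact isUnit_of_invertible _
    have hdet : IsUnit X.det := (Matrix.isUnit_iff_isUnit_det X).mp hXunit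
    refine ⟨X, hXunit, fun k => ?_⟩
    have hADiag : A k * X = X * Matrix.diagonal (fun j => mu j k) := by
      ext i j
      rw [Matrix.mul_diagonal]
      have hv : A k *ᵥ B' j = mu j k • B' j := (hmem_E (mu j) (B' j)).mp (hmu j) k
      have e1 : (A k * X) i j = (A k *ᵥ B' j) i := by
        simp [hXdef, Matrix.mul_apply, Matrix.mulVec, dotProduct]
      rw [e1, hv]
      simp [hXdef, mul_comm]
    have hfin : X⁻¹ * A k * X = Matrix.diagonal (fun j => mu j k) := by
      rw [Matrix.mul_assoc, hADiag, ← Matrix.mul_assoc, Matrix.nonsing_inv_mul _ hdet,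
        Matrix.one_mul]
    rw [hfin]
    exact Matrix.isDiag_diagonal _

/-- A commuting family is simultaneously diagonalizable if and only if every joint eigenvalue
(read off from a simultaneous unitary triangularization) is semisimple, i.e. its algebraic
multiplicity equals the dimension of the corresponding common eigenspace. -/
theorem stmt_7 (n d : ℕ) (A : Fin d → Matrix (Fin n) (Fin n) ℂ)
    (hcomm : ∀ j k, A j * A k = A k * A j)
    (U : Matrix (Fin n) (Fin n) ℂ) (hU : Uᴴ * U = 1 ∧ U * Uᴴ = 1)
    (htri : ∀ k, ((Uᴴ * A k * U).BlockTriangular (id : Fin n → Fin n))) :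
    (∃ X : Matrix (Fin n) (Fin n) ℂ, IsUnit X ∧ ∀ k, (X⁻¹ * A k * X).IsDiag) ↔
      ∀ i : Fin n,
        (Finset.univ.filter (fun j : Fin n =>
            ∀ k, (Uᴴ * A k * U) j j = (Uᴴ * A k * U) i i)).card =
          Module.finrank ℂ
            ↥(⨅ k, LinearMap.ker ((A k).mulVecLin - ((Uᴴ * A k * U) i i) • LinearMap.id)) := by
  exact key n d A (fun k => Uᴴ * A k * U) hcomm U hU.1 hU.2 (fun k => rfl) htri
end

section
/- Let 𝛌^{(1)},…,𝛌^{(n)} ∈ ℂ^d, let 𝛌 be one of them with multiplicity p (i.e., appearing p times in the list), and for unit μ ∈ ℂ^d define d(μ) = min over j with 𝛌^{(j)} ≠ 𝛌 of |μ*(𝛌^{(j)} − 𝛌)| / ‖𝛌^{(j)} − 𝛌‖₂. If μ ∼ Unif(S_ℂ^{d−1}) then for every C ∈ [0, 1/√(d−1)], Prob(d(μ) ≥ C) ≥ 1 − (n − p)(d − 1)C². -/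
open MeasureTheory Matrix

noncomputable section AuxStmt16

namespace Stmt16

variable {d : ℕ}

/-- squared euclidean norm on `Fin d → ℂ` -/
def nsq (x : Fin d → ℂ) : ℝ := ∑ k, ‖x k‖ ^ 2

lemma nsq_nonneg (x : Fin d → ℂ) : 0 ≤ nsq x :=
  Finset.sum_nonneg fun _ _ => sq_nonneg _

lemma dot_self_eq_nsq (x : Fin d → ℂ) : star x ⬝ᵥ x = (nsq x : ℂ) := by
  simp only [dotProduct, Pi.star_apply, nsq, Complex.ofReal_sum]
  refine Finset.sum_congr rfl fun k _ => ?_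
  rw [Complex.star_def, ← Complex.normSq_eq_conj_mul_self, Complex.normSq_eq_norm_sq]

lemma continuous_nsq : Continuous (nsq (d := d)) := by
  unfold nsq
  exact continuous_finset_sum _ fun k _ => ((continuous_apply k).norm.pow 2)

lemma nsq_eq_zero_iff {x : Fin d → ℂ} : nsq x = 0 ↔ x = 0 := by
  unfold nsq
  rw [Finset.sum_eq_zero_iff_of_nonneg fun k _ => sq_nonneg _]
  constructor
  · intro h; funext k
    have := h k (Finset.mem_univ k)
    simpa using this
  · rintro rfl k _; simp

lemma sum_eq_dot (μ v : Fin d → ℂ) :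
    (∑ k, (starRingEnd ℂ) (μ k) * v k) = star μ ⬝ᵥ v := rfl

lemma continuous_dot (v : Fin d → ℂ) :
    Continuous fun μ : Fin d → ℂ => ‖star μ ⬝ᵥ v‖ := by
  refine Continuous.norm ?_
  show Continuous fun μ : Fin d → ℂ => ∑ k, star (μ k) * v k
  exact continuous_finset_sum _ fun k _ =>
    (continuous_star.comp (continuous_apply k)).mul continuous_const

lemma continuous_dot' (μ : Fin d → ℂ) :
    Continuous fun z : Fin d → ℂ => ‖star μ ⬝ᵥ z‖ := by
  refine Continuous.norm ?_
  show Continuous fun z : Fin d → ℂ => ∑ k, star (μ k) * z k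
  exact continuous_finset_sum _ fun k _ =>
    continuous_const.mul (continuous_apply k)

section Unitary

variable {U : Matrix (Fin d) (Fin d) ℂ}

lemma nsq_mulVec (hU : U ∈ Matrix.unitaryGroup (Fin d) ℂ) (x : Fin d → ℂ) :
    nsq (U *ᵥ x) = nsq x := by
  have h : ((nsq (U *ᵥ x) : ℂ)) = (nsq x : ℂ) := by
    rw [← dot_self_eq_nsq, ← dot_self_eq_nsq, star_mulVec, dotProduct_mulVec,
      vecMul_vecMul, ← Matrix.star_eq_conjTranspose, hU.1, vecMul_one]
  exact_mod_cast h

lemma pair_mulVec_left (x w : Fin d → ℂ) :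
    star (U *ᵥ x) ⬝ᵥ w = star x ⬝ᵥ (Uᴴ *ᵥ w) := by
  rw [star_mulVec, dotProduct_mulVec]

lemma pair_mulVec_right (μ z : Fin d → ℂ) :
    star μ ⬝ᵥ (U *ᵥ z) = star (Uᴴ *ᵥ μ) ⬝ᵥ z := by
  rw [dotProduct_mulVec, star_mulVec, conjTranspose_conjTranspose]

end Unitary

/-- existence of a unitary sending `Pi.single 0 1` to any unit vector -/
lemma exists_unitary {m : ℕ} (w : Fin (m + 1) → ℂ) (hw : nsq w = 1) :
    ∃ U ∈ Matrix.unitaryGroup (Fin (m + 1)) ℂ, U *ᵥ Pi.single 0 1 = w := by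
  classical
  let w' : EuclideanSpace ℂ (Fin (m + 1)) := WithLp.toLp 2 w
  have hcard : Module.finrank ℂ (EuclideanSpace ℂ (Fin (m + 1)))
      = Fintype.card (Fin (m + 1)) := by
    simp [finrank_euclideanSpace]
  have hnorm : ‖w'‖ = 1 := by
    rw [EuclideanSpace.norm_eq]
    have : ∑ i, ‖w' i‖ ^ 2 = nsq w := rfl
    rw [this, hw, Real.sqrt_one]
  have horth : Orthonormal ℂ (({0} : Set (Fin (m + 1))).restrict (fun _ => w')) := by
    rw [orthonormal_iff_ite]
    rintro ⟨i, hi⟩ ⟨j, hj⟩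
    simp only [Set.mem_singleton_iff] at hi hj
    subst hi; subst hj
    simp only [Set.restrict_apply, if_pos]
    rw [@inner_self_eq_norm_sq_to_K ℂ, show ‖({0} : Set (Fin (m+1))).restrict (fun _ => w') ⟨0, hi⟩‖ = ‖w'‖ from rfl, hnorm]
    norm_num
  obtain ⟨b, hb⟩ := horth.exists_orthonormalBasis_extension_of_card_eq hcard
  have hb0 : b 0 = w' := hb 0 rfl
  refine ⟨Matrix.of (fun i j => b j i), ?_, ?_⟩
  · rw [Matrix.mem_unitaryGroup_iff, ← mul_eq_one_comm]
    ext j k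
    have h2 := (orthonormal_iff_ite.mp b.orthonormal) j k
    rw [PiLp.inner_apply] at h2
    simp only [Matrix.mul_apply, Matrix.star_apply, Matrix.of_apply, Matrix.one_apply]
    rw [← h2]
    refine Finset.sum_congr rfl fun i _ => ?_
    simp [RCLike.inner_apply, mul_comm]
  · funext i
    rw [Matrix.mulVec_single]
    simp only [Matrix.of_apply, mul_one]
    have : b 0 i = w' i := by rw [hb0]
    simpa using this

section VolumeInvariance

variable {U : Matrix (Fin d) (Fin d) ℂ}

lemma continuous_mulVec (U : Matrix (Fin d) (Fin d) ℂ) :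
    Continuous (fun x : Fin d → ℂ => U *ᵥ x) := by
  have : (fun x : Fin d → ℂ => U *ᵥ x) = ⇑(Matrix.mulVecLin U) := by
    funext x; simp [Matrix.mulVecLin_apply]
  rw [this]
  exact LinearMap.continuous_of_finiteDimensional _

lemma measurable_mulVec (U : Matrix (Fin d) (Fin d) ℂ) :
    Measurable (fun x : Fin d → ℂ => U *ᵥ x) :=
  (continuous_mulVec U).measurable

lemma volume_map_mulVec (hU : U ∈ Matrix.unitaryGroup (Fin d) ℂ) :
    Measure.map (fun x : Fin d → ℂ => U *ᵥ x) volume = volume := by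
  classical
  have h1 : Matrix.mulVecLin U ∘ₗ Matrix.mulVecLin (star U) = LinearMap.id := by
    rw [← Matrix.mulVecLin_mul, hU.2, Matrix.mulVecLin_one]
  have h2 : Matrix.mulVecLin (star U) ∘ₗ Matrix.mulVecLin U = LinearMap.id := by
    rw [← Matrix.mulVecLin_mul, hU.1, Matrix.mulVecLin_one]
  let e : (Fin d → ℂ) ≃ₗ[ℂ] (Fin d → ℂ) :=
    LinearEquiv.ofLinear (Matrix.mulVecLin U) (Matrix.mulVecLin (star U)) h1 h2
  let f : (Fin d → ℂ) ≃ₗ[ℝ] (Fin d → ℂ) := e.restrictScalars ℝ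
  have hdet : LinearMap.det (f : (Fin d → ℂ) →ₗ[ℝ] (Fin d → ℂ)) ≠ 0 :=
    f.isUnit_det'.ne_zero
  have hco : ⇑(f : (Fin d → ℂ) →ₗ[ℝ] (Fin d → ℂ)) = (fun x : Fin d → ℂ => U *ᵥ x) := rfl
  have hmap := Measure.map_linearMap_addHaar_eq_smul_addHaar volume hdet
  rw [hco] at hmap
  set c : ENNReal := ENNReal.ofReal |(LinearMap.det (f : (Fin d → ℂ) →ₗ[ℝ] (Fin d → ℂ)))⁻¹|
  set S : Set (Fin d → ℂ) := {x | nsq x < 1} with hS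
  have hSopen : IsOpen S := isOpen_lt continuous_nsq continuous_const
  have hpre : (fun x : Fin d → ℂ => U *ᵥ x) ⁻¹' S = S := by
    ext x; simp only [Set.mem_preimage, hS, Set.mem_setOf_eq, nsq_mulVec hU]
  have hSval : Measure.map (fun x : Fin d → ℂ => U *ᵥ x) volume S = volume S := by
    rw [Measure.map_apply (measurable_mulVec U) hSopen.measurableSet, hpre]
  have hpos : volume S ≠ 0 := by
    refine (hSopen.measure_pos volume ⟨0, ?_⟩).ne'
    simp [hS, nsq]
  have hfin : volume S ≠ ⊤ := by
    have hsub : S ⊆ Metric.closedBall (0 : Fin d → ℂ) 1 := by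
      intro x hx
      rw [Metric.mem_closedBall, dist_zero_right]
      refine pi_norm_le_iff_of_nonneg zero_le_one |>.mpr fun i => ?_
      have h3 : ‖x i‖ ^ 2 ≤ nsq x :=
        Finset.single_le_sum (f := fun k => ‖x k‖ ^ 2)
          (fun k _ => sq_nonneg _) (Finset.mem_univ i)
      have h4 : nsq x < 1 := hx
      nlinarith [norm_nonneg (x i)]
    exact ((measure_mono hsub).trans_lt
      (isCompact_closedBall _ _).measure_lt_top).ne
  have hc : c = 1 := by
    rw [hmap, Measure.smul_apply, smul_eq_mul] at hSval
    have h5 : c * volume S = 1 * volume S := by rw [one_mul]; exact hSval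
    exact (ENNReal.mul_left_inj hpos hfin).mp h5
  rw [hmap, hc, one_smul]

end VolumeInvariance

/-! ### the Gaussian reference measure -/

def g1 (a : ℂ) : ℝ := (Real.pi)⁻¹ * Real.exp (-‖a‖ ^ 2)

lemma g1_nonneg (a : ℂ) : 0 ≤ g1 a := by
  unfold g1; positivity

lemma continuous_g1 : Continuous g1 := by
  unfold g1
  fun_prop

def dens (z : Fin d → ℂ) : ℝ := ∏ k, g1 (z k)

lemma dens_nonneg (z : Fin d → ℂ) : 0 ≤ dens z :=
  Finset.prod_nonneg fun k _ => g1_nonneg _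

lemma continuous_dens : Continuous (dens (d := d)) :=
  continuous_finset_prod _ fun k _ => continuous_g1.comp (continuous_apply k)

lemma dens_eq (z : Fin d → ℂ) :
    dens z = (Real.pi⁻¹) ^ d * Real.exp (-(nsq z)) := by
  unfold dens g1
  rw [Finset.prod_mul_distrib, Finset.prod_const, ← Real.exp_sum]
  simp [nsq, Finset.card_univ]

lemma dens_mulVec {U : Matrix (Fin d) (Fin d) ℂ}
    (hU : U ∈ Matrix.unitaryGroup (Fin d) ℂ) (z : Fin d → ℂ) :
    dens (U *ᵥ z) = dens z := by
  rw [dens_eq, dens_eq, nsq_mulVec hU]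

def gam (d : ℕ) : Measure (Fin d → ℂ) :=
  volume.withDensity fun z => ENNReal.ofReal (dens z)

lemma gam_map {U : Matrix (Fin d) (Fin d) ℂ}
    (hU : U ∈ Matrix.unitaryGroup (Fin d) ℂ) :
    (gam d).map (fun x : Fin d → ℂ => U *ᵥ x) = gam d := by
  ext s hs
  rw [Measure.map_apply (measurable_mulVec U) hs, gam,
    withDensity_apply _ hs, withDensity_apply _ ((measurable_mulVec U) hs)]
  have hcong : ∫⁻ x in (fun x : Fin d → ℂ => U *ᵥ x) ⁻¹' s, ENNReal.ofReal (dens x) ∂volume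
      = ∫⁻ x in (fun x : Fin d → ℂ => U *ᵥ x) ⁻¹' s,
        ENNReal.ofReal (dens (U *ᵥ x)) ∂volume := by
    refine lintegral_congr fun x => ?_
    rw [dens_mulVec hU]
  rw [hcong]
  calc ∫⁻ x in (fun x : Fin d → ℂ => U *ᵥ x) ⁻¹' s,
        ENNReal.ofReal (dens (U *ᵥ x)) ∂volume
      = ∫⁻ y in s, ENNReal.ofReal (dens y)
          ∂(Measure.map (fun x : Fin d → ℂ => U *ᵥ x) volume) :=
        (MeasureTheory.setLIntegral_map hs
          (continuous_dens.measurable.ennreal_ofReal) (measurable_mulVec U)).symm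
    _ = ∫⁻ y in s, ENNReal.ofReal (dens y) ∂volume := by rw [volume_map_mulVec hU]

/-! ### 1-d Gaussian computations over ℂ -/

lemma norm_sq_complex (a : ℂ) : ‖a‖ ^ 2 = a.re ^ 2 + a.im ^ 2 := by
  rw [Complex.sq_norm, Complex.normSq_apply]; ring

lemma integrable_cexp_norm {b : ℝ} (hb : 0 < b) :
    Integrable (fun a : ℂ => Real.exp (-(b * ‖a‖ ^ 2))) volume := by
  have h1 : Integrable (fun p : ℝ × ℝ =>
      Real.exp (-b * p.1 ^ 2) * Real.exp (-b * p.2 ^ 2)) volume :=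
    (integrable_exp_neg_mul_sq hb).mul_prod (integrable_exp_neg_mul_sq hb)
  have h2 := (Complex.volume_preserving_equiv_real_prod.integrable_comp
    h1.aestronglyMeasurable).mpr h1
  have h3 : (fun p : ℝ × ℝ => Real.exp (-b * p.1 ^ 2) * Real.exp (-b * p.2 ^ 2)) ∘
      Complex.measurableEquivRealProd = fun a : ℂ => Real.exp (-(b * ‖a‖ ^ 2)) := by
    funext a
    simp only [Function.comp_apply, Complex.measurableEquivRealProd_apply]
    rw [← Real.exp_add, norm_sq_complex]
    ring_nf
  rw [h3] at h2
  exact h2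

/-- `∫ exp (-b‖a‖²) = π / b` over `ℂ`. -/
lemma integral_cexp_norm {b : ℝ} (hb : 0 < b) :
    ∫ a : ℂ, Real.exp (-(b * ‖a‖ ^ 2)) ∂volume = Real.pi / b := by
  have h := Complex.integral_exp_neg_mul_rpow (p := 2) (by norm_num) hb
  have h2 : ∀ x : ℂ, Real.exp (-b * ‖x‖ ^ (2 : ℝ)) = Real.exp (-(b * ‖x‖ ^ 2)) := by
    intro x
    rw [show ((2:ℝ)) = ((2:ℕ):ℝ) by norm_num, Real.rpow_natCast]
    ring_nf
  simp only [h2] at h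
  rw [h]
  rw [show (-2 / 2 : ℝ) = -1 by norm_num, Real.rpow_neg_one,
    show (2 / 2 + 1 : ℝ) = 2 by norm_num, Real.Gamma_two]
  ring

lemma lintegral_cexp_norm {b : ℝ} (hb : 0 < b) :
    ∫⁻ a : ℂ, ENNReal.ofReal (Real.exp (-(b * ‖a‖ ^ 2))) ∂volume
      = ENNReal.ofReal (Real.pi / b) := by
  rw [← ofReal_integral_eq_lintegral_ofReal (integrable_cexp_norm hb)
    (Filter.Eventually.of_forall fun a => (Real.exp_pos _).le), integral_cexp_norm hb]

/-- Gaussian integral over the disc of radius `t` in `ℂ`. -/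
lemma integral_disc {t : ℝ} (ht : 0 ≤ t) :
    ∫ a : ℂ, Set.indicator {x : ℂ | ‖x‖ < t} (fun x => Real.exp (-‖x‖ ^ 2)) a ∂volume
      = Real.pi * (1 - Real.exp (-t ^ 2)) := by
  have hopen : IsOpen {x : ℂ | ‖x‖ < t} := isOpen_lt continuous_norm continuous_const
  have key := Complex.integral_comp_polarCoord_symm
    (Set.indicator {x : ℂ | ‖x‖ < t} (fun x => Real.exp (-‖x‖ ^ 2)))
  rw [← key, polarCoord_target]
  have hset : MeasurableSet (Set.Ioi (0:ℝ) ×ˢ Set.Ioo (-Real.pi) Real.pi) :=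
    (measurableSet_Ioi.prod measurableSet_Ioo)
  rw [setIntegral_congr_fun hset (g := fun p : ℝ × ℝ =>
      (Set.indicator (Set.Ioo (0:ℝ) t) (fun s => s * Real.exp (-s ^ 2)) p.1) * (1:ℝ)) ?_]
  · rw [MeasureTheory.Measure.volume_eq_prod]
    have hsplit : ∫ x : ℝ × ℝ in Set.Ioi (0:ℝ) ×ˢ Set.Ioo (-Real.pi) Real.pi,
        (Set.Ioo (0:ℝ) t).indicator (fun s => s * Real.exp (-s ^ 2)) x.1 * (1:ℝ)
        ∂((volume : Measure ℝ).prod volume)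
        = (∫ r in Set.Ioi (0:ℝ), (Set.Ioo (0:ℝ) t).indicator (fun s => s * Real.exp (-s ^ 2)) r)
          * ∫ _ in Set.Ioo (-Real.pi) Real.pi, (1:ℝ) :=
      setIntegral_prod_mul
        (fun r : ℝ => (Set.Ioo (0:ℝ) t).indicator (fun s => s * Real.exp (-s ^ 2)) r)
        (fun _ : ℝ => (1:ℝ)) _ _
    rw [hsplit]
    have h2 : ∫ (_ : ℝ) in Set.Ioo (-Real.pi) Real.pi, (1:ℝ) = 2 * Real.pi := by
      simp only [integral_const, MeasurableSet.univ, Measure.restrict_apply, Set.univ_inter,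
        Real.volume_Ioo, smul_eq_mul, mul_one]
      rw [Measure.real, Measure.restrict_apply MeasurableSet.univ, Set.univ_inter, Real.volume_Ioo, ENNReal.toReal_ofReal
        (by have := Real.pi_pos; linarith : (0:ℝ) ≤ Real.pi - -Real.pi)]
      ring
    rw [h2]
    have h3 : ∫ r in Set.Ioi (0:ℝ),
        Set.indicator (Set.Ioo (0:ℝ) t) (fun s => s * Real.exp (-s ^ 2)) r
        = ∫ r in Set.Ioo (0:ℝ) t, r * Real.exp (-r ^ 2) := by
      rw [setIntegral_indicator measurableSet_Ioo]
      congr 1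
      rw [Set.inter_eq_self_of_subset_right]
      intro x hx; exact hx.1
    rw [h3]
    have h4 : ∫ r in Set.Ioo (0:ℝ) t, r * Real.exp (-r ^ 2)
        = ∫ r in (0:ℝ)..t, r * Real.exp (-r ^ 2) := by
      rw [intervalIntegral.integral_of_le ht, ← integral_Ioc_eq_integral_Ioo]
    rw [h4]
    have h5 : ∫ r in (0:ℝ)..t, r * Real.exp (-r ^ 2)
        = (1 - Real.exp (-t ^ 2)) / 2 := by
      have hderiv : ∀ r ∈ Set.uIcc (0:ℝ) t,
          HasDerivAt (fun x : ℝ => -Real.exp (-x ^ 2) / 2) (r * Real.exp (-r ^ 2)) r := by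
        intro r _
        have h6 := (((hasDerivAt_pow 2 r).neg).exp.neg).div_const 2
        refine h6.congr_deriv ?_
        norm_num
        ring
      rw [intervalIntegral.integral_eq_sub_of_hasDerivAt hderiv
        ((continuous_id.mul ((continuous_pow 2).neg.rexp)).intervalIntegrable 0 t)]
      norm_num
      ring
    rw [h5]
    ring
  · rintro ⟨r, θ⟩ ⟨hr, hθ⟩
    simp only [Set.mem_Ioi] at hr
    have habs : ‖Complex.polarCoord.symm (r, θ)‖ = r := by
      rw [Complex.norm_polarCoord_symm, abs_of_pos hr]
    dsimp only
    by_cases hlt : r < t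
    · rw [Set.indicator_of_mem (show ((r,θ).1 : ℝ) ∈ Set.Ioo 0 t from ⟨hr, hlt⟩),
        Set.indicator_of_mem (show Complex.polarCoord.symm (r,θ) ∈ {x : ℂ | ‖x‖ < t} by
          simp only [Set.mem_setOf_eq, habs]; exact hlt)]
      simp only [smul_eq_mul, habs, mul_one]
    · rw [Set.indicator_of_notMem (show ((r,θ).1 : ℝ) ∉ Set.Ioo 0 t from
          fun h => hlt h.2),
        Set.indicator_of_notMem (show Complex.polarCoord.symm (r,θ) ∉ {x : ℂ | ‖x‖ < t} by
          simp only [Set.mem_setOf_eq, habs]; exact hlt)]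
      simp

lemma lintegral_disc {t : ℝ} (ht : 0 ≤ t) :
    ∫⁻ a : ℂ, ENNReal.ofReal
        (Set.indicator {x : ℂ | ‖x‖ < t} (fun x => Real.exp (-‖x‖ ^ 2)) a) ∂volume
      = ENNReal.ofReal (Real.pi * (1 - Real.exp (-t ^ 2))) := by
  have hopen : IsOpen {x : ℂ | ‖x‖ < t} := isOpen_lt continuous_norm continuous_const
  have hint : Integrable
      (Set.indicator {x : ℂ | ‖x‖ < t} (fun x => Real.exp (-‖x‖ ^ 2))) volume := by
    have := integrable_cexp_norm (b := 1) one_pos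
    simp only [one_mul] at this
    exact this.indicator hopen.measurableSet
  rw [← ofReal_integral_eq_lintegral_ofReal hint
    (Filter.Eventually.of_forall fun a => Set.indicator_nonneg
      (fun x _ => (Real.exp_pos _).le) a), integral_disc ht]

lemma ofReal_indicator_comm (s : Set ℂ) (f : ℂ → ℝ) (a : ℂ) :
    ENNReal.ofReal (s.indicator f a) = s.indicator (fun x => ENNReal.ofReal (f x)) a := by
  by_cases h : a ∈ s <;> simp [h]

/-- normalized disc integral: `∫⁻ 1_{‖a‖<t} g1 = 1 - exp (-t²)` -/
lemma lintegral_disc' {t : ℝ} (ht : 0 ≤ t) :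
    ∫⁻ a : ℂ, Set.indicator {x : ℂ | ‖x‖ < t}
        (fun x => ENNReal.ofReal (g1 x)) a ∂volume
      = ENNReal.ofReal (1 - Real.exp (-t ^ 2)) := by
  have hopen : IsOpen {x : ℂ | ‖x‖ < t} := isOpen_lt continuous_norm continuous_const
  have hpt : ∀ a : ℂ, Set.indicator {x : ℂ | ‖x‖ < t} (fun x => ENNReal.ofReal (g1 x)) a
      = ENNReal.ofReal (Real.pi⁻¹)
        * Set.indicator {x : ℂ | ‖x‖ < t} (fun x => ENNReal.ofReal (Real.exp (-‖x‖ ^ 2))) a := by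
    intro a
    by_cases h : a ∈ {x : ℂ | ‖x‖ < t}
    · rw [Set.indicator_of_mem h, Set.indicator_of_mem h, g1,
        ENNReal.ofReal_mul (by positivity)]
    · rw [Set.indicator_of_notMem h, Set.indicator_of_notMem h, mul_zero]
  calc ∫⁻ a : ℂ, Set.indicator {x : ℂ | ‖x‖ < t} (fun x => ENNReal.ofReal (g1 x)) a ∂volume
      = ∫⁻ a : ℂ, ENNReal.ofReal (Real.pi⁻¹)
          * Set.indicator {x : ℂ | ‖x‖ < t}
            (fun x => ENNReal.ofReal (Real.exp (-‖x‖ ^ 2))) a ∂volume :=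
        lintegral_congr hpt
    _ = ENNReal.ofReal (Real.pi⁻¹)
          * ∫⁻ a : ℂ, Set.indicator {x : ℂ | ‖x‖ < t}
            (fun x => ENNReal.ofReal (Real.exp (-‖x‖ ^ 2))) a ∂volume := by
        rw [lintegral_const_mul]
        exact (Measurable.indicator
          ((measurable_norm.pow_const 2).neg.exp.ennreal_ofReal) hopen.measurableSet)
    _ = ENNReal.ofReal (Real.pi⁻¹) * ENNReal.ofReal (Real.pi * (1 - Real.exp (-t ^ 2))) := by
        rw [← lintegral_disc ht]
        congr 1
        exact lintegral_congr fun a => (ofReal_indicator_comm _ _ a).symm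
    _ = ENNReal.ofReal (1 - Real.exp (-t ^ 2)) := by
        rw [← ENNReal.ofReal_mul (by positivity), ← mul_assoc,
          inv_mul_cancel₀ Real.pi_ne_zero, one_mul]

/-- product of identical 1-d integrals over the pi volume -/
lemma lint_pi_prod (m : ℕ) (g : ℂ → ℝ) (hg : Measurable g) (hg0 : ∀ a, 0 ≤ g a) :
    ∫⁻ y : Fin m → ℂ, ENNReal.ofReal (∏ j, g (y j)) ∂volume
      = (∫⁻ a : ℂ, ENNReal.ofReal (g a) ∂volume) ^ m := by
  induction m with
  | zero =>
    simp only [Finset.univ_eq_empty, Finset.prod_empty, ENNReal.ofReal_one, pow_zero]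
    rw [lintegral_one, volume_pi, Measure.pi_univ]
    simp
  | succ m ih =>
    set G : ℂ × (Fin m → ℂ) → ENNReal := fun p =>
      ENNReal.ofReal (g p.1) * ENNReal.ofReal (∏ j, g (p.2 j)) with hG
    have hGmeas : Measurable G := by
      apply Measurable.fun_mul
      · exact (hg.comp measurable_fst).ennreal_ofReal
      · exact (Finset.measurable_prod Finset.univ fun j _ =>
          hg.comp ((measurable_pi_apply j).comp measurable_snd)).ennreal_ofReal
    have hmp := measurePreserving_piFinSuccAbove
      (fun _ : Fin (m+1) => (volume : Measure ℂ)) 0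
    have key : ∀ y : Fin (m+1) → ℂ, ENNReal.ofReal (∏ j, g (y j))
        = G (MeasurableEquiv.piFinSuccAbove (fun _ => ℂ) 0 y) := by
      intro y
      rw [hG]
      simp only [MeasurableEquiv.piFinSuccAbove_apply]
      rw [Fin.prod_univ_succAbove (fun k => g (y k)) 0, ENNReal.ofReal_mul (hg0 _)]
      rfl
    calc ∫⁻ y : Fin (m+1) → ℂ, ENNReal.ofReal (∏ j, g (y j)) ∂volume
        = ∫⁻ y : Fin (m+1) → ℂ, G (MeasurableEquiv.piFinSuccAbove (fun _ => ℂ) 0 y)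
            ∂(Measure.pi fun _ => volume) := by
          rw [← volume_pi]; exact lintegral_congr key
      _ = ∫⁻ p : ℂ × (Fin m → ℂ), G p ∂((volume : Measure ℂ).prod
            (Measure.pi fun _ => (volume : Measure ℂ))) := hmp.lintegral_comp hGmeas
      _ = (∫⁻ a : ℂ, ENNReal.ofReal (g a) ∂volume)
            * ∫⁻ y : Fin m → ℂ, ENNReal.ofReal (∏ j, g (y j))
              ∂(Measure.pi fun _ => volume) := by
          rw [hG]
          exact lintegral_prod_mul (hg.ennreal_ofReal.aemeasurable)
            ((Finset.measurable_prod Finset.univ fun j _ =>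
              hg.comp (measurable_pi_apply j)).ennreal_ofReal.aemeasurable)
      _ = (∫⁻ a : ℂ, ENNReal.ofReal (g a) ∂volume) ^ (m + 1) := by
          rw [← volume_pi, ih, pow_succ]
          ring

lemma lintegral_g1 : ∫⁻ a : ℂ, ENNReal.ofReal (g1 a) ∂volume = 1 := by
  have h : ∀ a : ℂ, ENNReal.ofReal (g1 a)
      = ENNReal.ofReal (Real.pi⁻¹) * ENNReal.ofReal (Real.exp (-(1 * ‖a‖ ^ 2))) := by
    intro a
    rw [g1, ENNReal.ofReal_mul (by positivity), one_mul]
  simp_rw [h]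
  rw [lintegral_const_mul _ (by fun_prop),
    lintegral_cexp_norm one_pos, ← ENNReal.ofReal_mul (by positivity)]
  rw [div_one, inv_mul_cancel₀ Real.pi_ne_zero, ENNReal.ofReal_one]

lemma gam_univ (d : ℕ) : gam d Set.univ = 1 := by
  rw [gam, withDensity_apply _ MeasurableSet.univ, Measure.restrict_univ]
  have : ∀ z : Fin d → ℂ, ENNReal.ofReal (dens z) = ENNReal.ofReal (∏ k, g1 (z k)) :=
    fun z => rfl
  simp_rw [this]
  rw [lint_pi_prod d g1 continuous_g1.measurable g1_nonneg, lintegral_g1, one_pow]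

/-! ### the key single-vector estimate -/

lemma cond_iff {C : ℝ} (hC0 : 0 ≤ C) (hC1 : C < 1) (x S : ℝ) (hx : 0 ≤ x) (hS : 0 ≤ S) :
    x < C * Real.sqrt (x ^ 2 + S) ↔
      x < (C / Real.sqrt (1 - C ^ 2)) * Real.sqrt S := by
  have h1C : 0 < 1 - C ^ 2 := by nlinarith
  set c := C / Real.sqrt (1 - C ^ 2) with hc
  have hc0 : 0 ≤ c := div_nonneg hC0 (Real.sqrt_nonneg _)
  have hcsq : c ^ 2 = C ^ 2 / (1 - C ^ 2) := by
    rw [hc, div_pow, Real.sq_sqrt h1C.le]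
  have hL : x < C * Real.sqrt (x ^ 2 + S) ↔ x ^ 2 < C ^ 2 * (x ^ 2 + S) := by
    rw [show C * Real.sqrt (x ^ 2 + S) = Real.sqrt (C ^ 2 * (x ^ 2 + S)) by
      rw [Real.sqrt_mul (sq_nonneg C), Real.sqrt_sq hC0]]
    exact Real.lt_sqrt hx
  have hR : x < c * Real.sqrt S ↔ x ^ 2 < c ^ 2 * S := by
    rw [show c * Real.sqrt S = Real.sqrt (c ^ 2 * S) by
      rw [Real.sqrt_mul (sq_nonneg c), Real.sqrt_sq hc0]]
    exact Real.lt_sqrt hx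
  rw [hL, hR, hcsq, div_mul_eq_mul_div, lt_div_iff₀ h1C]
  constructor <;> intro h <;> nlinarith

lemma set_normalize {d : ℕ} (v : Fin d → ℂ) (hv : 0 < nsq v) (C : ℝ) :
    {μ : Fin d → ℂ | ‖star μ ⬝ᵥ v‖ < C * Real.sqrt (nsq v)}
      = {μ | ‖star μ ⬝ᵥ (fun k => (((Real.sqrt (nsq v))⁻¹ : ℝ) : ℂ) * v k)‖ < C} := by
  have hr : 0 < Real.sqrt (nsq v) := Real.sqrt_pos.mpr hv
  ext μ
  simp only [Set.mem_setOf_eq]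
  have hdot : star μ ⬝ᵥ (fun k => (((Real.sqrt (nsq v))⁻¹ : ℝ) : ℂ) * v k)
      = (((Real.sqrt (nsq v))⁻¹ : ℝ) : ℂ) * (star μ ⬝ᵥ v) := by
    simp only [dotProduct, Finset.mul_sum]
    exact Finset.sum_congr rfl fun k _ => by ring
  rw [hdot, norm_mul, Complex.norm_real, Real.norm_of_nonneg (by positivity),
    ← div_eq_inv_mul, div_lt_iff₀ hr]

lemma nsq_normalize {d : ℕ} (v : Fin d → ℂ) (hv : 0 < nsq v) :
    nsq (fun k => (((Real.sqrt (nsq v))⁻¹ : ℝ) : ℂ) * v k) = 1 := by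
  have h : ∀ k, ‖(((Real.sqrt (nsq v))⁻¹ : ℝ) : ℂ) * v k‖ ^ 2
      = (Real.sqrt (nsq v))⁻¹ ^ 2 * ‖v k‖ ^ 2 := by
    intro k
    rw [norm_mul, mul_pow, Complex.norm_real, Real.norm_of_nonneg (by positivity)]
  show (∑ k, ‖(((Real.sqrt (nsq v))⁻¹ : ℝ) : ℂ) * v k‖ ^ 2) = 1
  simp_rw [h]
  rw [← Finset.mul_sum]
  have h2 : (∑ k, ‖v k‖ ^ 2) = nsq v := rfl
  rw [h2, inv_pow, Real.sq_sqrt (nsq_nonneg v)]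
  exact inv_mul_cancel₀ hv.ne'

lemma key {d : ℕ} (hd : 2 ≤ d) (P : Measure (Fin d → ℂ)) [IsProbabilityMeasure P]
    (hsphere : ∀ᵐ x ∂P, nsq x = 1)
    (hrot : ∀ U ∈ Matrix.unitaryGroup (Fin d) ℂ, P.map (fun x => U *ᵥ x) = P)
    {C : ℝ} (hC0 : 0 ≤ C) (hC1 : C ≤ 1)
    (v : Fin d → ℂ) (hv : v ≠ 0) :
    P {μ | ‖star μ ⬝ᵥ v‖ < C * Real.sqrt (nsq v)}
      ≤ ENNReal.ofReal (((d : ℝ) - 1) * C ^ 2) := by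
  obtain ⟨m, rfl⟩ : ∃ m, d = m + 1 := ⟨d - 1, by omega⟩
  have hm : 1 ≤ m := by omega
  haveI : IsProbabilityMeasure (gam (m + 1)) := ⟨gam_univ (m + 1)⟩
  rcases eq_or_lt_of_le hC1 with hCeq | hClt
  · -- trivial case C = 1
    refine le_trans prob_le_one ?_
    rw [← ENNReal.ofReal_one]
    apply ENNReal.ofReal_le_ofReal
    rw [← hCeq]
    have hm' : (1 : ℝ) ≤ m := by exact_mod_cast hm
    push_cast
    nlinarith
  -- invariance of P-events
  have hPinv : ∀ u : Fin (m+1) → ℂ, nsq u = 1 →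
      P {μ | ‖star μ ⬝ᵥ u‖ < C} = P {μ | ‖μ 0‖ < C} := by
    intro u hu
    obtain ⟨U, hU, hUe⟩ := exists_unitary u hu
    have hUstar : Uᴴ *ᵥ u = Pi.single 0 1 := by
      rw [← hUe, Matrix.mulVec_mulVec, ← Matrix.star_eq_conjTranspose, hU.1,
        Matrix.one_mulVec]
    have hmeasS : MeasurableSet {μ : Fin (m+1) → ℂ | ‖star μ ⬝ᵥ u‖ < C} :=
      (isOpen_lt (continuous_dot u) continuous_const).measurableSet
    conv_lhs => rw [← hrot U hU]
    rw [Measure.map_apply (measurable_mulVec U) hmeasS]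
    congr 1
    ext x
    simp only [Set.mem_preimage, Set.mem_setOf_eq]
    rw [pair_mulVec_left, hUstar, dotProduct_single, mul_one, Pi.star_apply,
      norm_star]
  -- normalize the statement
  have hvpos : 0 < nsq v :=
    lt_of_le_of_ne (nsq_nonneg v) (fun h => hv (nsq_eq_zero_iff.mp h.symm))
  rw [set_normalize v hvpos C, hPinv _ (nsq_normalize v hvpos)]
  -- notation
  set c := C / Real.sqrt (1 - C ^ 2) with hc
  have h1C : 0 < 1 - C ^ 2 := by nlinarith
  have hc0 : 0 ≤ c := div_nonneg hC0 (Real.sqrt_nonneg _)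
  have hcsq : c ^ 2 = C ^ 2 / (1 - C ^ 2) := by
    rw [hc, div_pow, Real.sq_sqrt h1C.le]
  set T : Set ((Fin (m+1) → ℂ) × (Fin (m+1) → ℂ)) :=
    {q | ‖star q.1 ⬝ᵥ q.2‖ < C * Real.sqrt (nsq q.2)} with hT
  have hTopen : IsOpen T := by
    apply isOpen_lt
    · refine Continuous.norm ?_
      show Continuous fun q : (Fin (m+1) → ℂ) × (Fin (m+1) → ℂ) =>
        ∑ k, star (q.1 k) * q.2 k
      exact continuous_finset_sum _ fun k _ =>
        ((continuous_star.comp ((continuous_apply k).comp continuous_fst)).mul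
          ((continuous_apply k).comp continuous_snd))
    · exact continuous_const.mul
        (Real.continuous_sqrt.comp (continuous_nsq.comp continuous_snd))
  have hTmeas : MeasurableSet T := hTopen.measurableSet
  set BadE : Set (Fin (m+1) → ℂ) := {z | ‖z 0‖ < C * Real.sqrt (nsq z)} with hBadE
  have hBadEopen : IsOpen BadE :=
    isOpen_lt ((continuous_apply 0).norm)
      (continuous_const.mul (Real.continuous_sqrt.comp continuous_nsq))
  -- Fubini, slicing in μ first
  have hleft : (P.prod (gam (m+1))) T = gam (m+1) BadE := by
    rw [Measure.prod_apply hTmeas]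
    have hae : ∀ᵐ μ ∂P, gam (m+1) (Prod.mk μ ⁻¹' T) = gam (m+1) BadE := by
      filter_upwards [hsphere] with μ hμ
      obtain ⟨U, hU, hUe⟩ := exists_unitary μ hμ
      have hUstar : Uᴴ *ᵥ μ = Pi.single 0 1 := by
        rw [← hUe, Matrix.mulVec_mulVec, ← Matrix.star_eq_conjTranspose, hU.1,
          Matrix.one_mulVec]
      have hset : Prod.mk μ ⁻¹' T
          = {z : Fin (m+1) → ℂ | ‖star μ ⬝ᵥ z‖ < C * Real.sqrt (nsq z)} := rfl
      rw [hset]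
      have hmeasz : MeasurableSet
          {z : Fin (m+1) → ℂ | ‖star μ ⬝ᵥ z‖ < C * Real.sqrt (nsq z)} :=
        (isOpen_lt (continuous_dot' μ)
          (continuous_const.mul (Real.continuous_sqrt.comp continuous_nsq))).measurableSet
      conv_lhs => rw [← gam_map hU]
      rw [Measure.map_apply (measurable_mulVec U) hmeasz]
      congr 1
      ext z
      simp only [Set.mem_preimage, Set.mem_setOf_eq, hBadE]
      rw [pair_mulVec_right, hUstar, nsq_mulVec hU]
      have hsingle : star (Pi.single 0 1 : Fin (m+1) → ℂ) ⬝ᵥ z = z 0 := by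
        have hstar : star (Pi.single 0 1 : Fin (m+1) → ℂ) = Pi.single 0 1 := by
          funext k
          simp [Pi.star_apply, Pi.single_apply, apply_ite (star : ℂ → ℂ)]
        rw [hstar, single_dotProduct, one_mul]
      rw [hsingle]
    rw [lintegral_congr_ae hae, lintegral_const, measure_univ, mul_one]
  -- Fubini, slicing in z first
  have hright : (P.prod (gam (m+1))) T = P {μ : Fin (m+1) → ℂ | ‖μ 0‖ < C} := by
    rw [Measure.prod_apply_symm hTmeas]
    have hzero : gam (m+1) {z : Fin (m+1) → ℂ | nsq z = 0} = 0 := by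
      have hvol0 : (volume : Measure (Fin (m+1) → ℂ)) {z | nsq z = 0} = 0 := by
        have hsub : {z : Fin (m+1) → ℂ | nsq z = 0} ⊆ {z | z 0 = 0} := by
          intro z hz
          have : z = 0 := nsq_eq_zero_iff.mp hz
          simp [this]
        refine measure_mono_null hsub ?_
        have hmp := measurePreserving_piFinSuccAbove
          (fun _ : Fin (m+1) => (volume : Measure ℂ)) 0
        have hpre : {z : Fin (m+1) → ℂ | z 0 = 0}
            = (MeasurableEquiv.piFinSuccAbove (fun _ => ℂ) 0) ⁻¹'
              (({0} : Set ℂ) ×ˢ Set.univ) := by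
          ext z
          simp only [Set.mem_setOf_eq, Set.mem_preimage, Set.mem_prod, Set.mem_singleton_iff,
            Set.mem_univ, and_true]
          rfl
        rw [volume_pi, hpre,
          hmp.measure_preimage ((MeasurableSet.singleton 0).prod MeasurableSet.univ).nullMeasurableSet,
          Measure.prod_prod, measure_singleton, zero_mul]
      exact (withDensity_absolutelyContinuous volume _) hvol0
    have hae2 : ∀ᵐ z ∂(gam (m+1)),
        P ((fun μ => (μ, z)) ⁻¹' T) = P {μ : Fin (m+1) → ℂ | ‖μ 0‖ < C} := by
      rw [ae_iff]
      refine measure_mono_null ?_ hzero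
      intro z hz
      simp only [Set.mem_setOf_eq] at hz ⊢
      by_contra hnz
      apply hz
      have hzpos : 0 < nsq z := lt_of_le_of_ne (nsq_nonneg z) (Ne.symm hnz)
      have hset2 : (fun μ : Fin (m+1) → ℂ => (μ, z)) ⁻¹' T
          = {μ : Fin (m+1) → ℂ | ‖star μ ⬝ᵥ z‖ < C * Real.sqrt (nsq z)} := rfl
      rw [hset2, set_normalize z hzpos C, hPinv _ (nsq_normalize z hzpos)]
    rw [lintegral_congr_ae hae2, lintegral_const, measure_univ, mul_one]
  -- compute `gam BadE`
  have hcomp : gam (m+1) BadE = ENNReal.ofReal (1 - (1 - C ^ 2) ^ m) := by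
    have hBmeas := hBadEopen.measurableSet
    rw [gam, withDensity_apply _ hBmeas, ← lintegral_indicator hBmeas]
    have hmp := measurePreserving_piFinSuccAbove
      (fun _ : Fin (m+1) => (volume : Measure ℂ)) 0
    set Φ : ℂ × (Fin m → ℂ) → ENNReal := fun p =>
      ENNReal.ofReal (dens p.2) * Set.indicator
        {q : ℂ × (Fin m → ℂ) | ‖q.1‖ < c * Real.sqrt (nsq q.2)}
        (fun q => ENNReal.ofReal (g1 q.1)) p with hPhi
    have hPhimeas : Measurable Φ := by
      refine Measurable.mul ?_ ?_
      · exact (continuous_dens.measurable.comp measurable_snd).ennreal_ofReal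
      · refine Measurable.indicator ?_ ?_
        · exact (continuous_g1.measurable.comp measurable_fst).ennreal_ofReal
        · exact (isOpen_lt (continuous_fst.norm)
            (continuous_const.mul
              (Real.continuous_sqrt.comp (continuous_nsq.comp continuous_snd)))).measurableSet
    have hpt : ∀ y : Fin (m+1) → ℂ,
        BadE.indicator (fun z => ENNReal.ofReal (dens z)) y
          = Φ (MeasurableEquiv.piFinSuccAbove (fun _ => ℂ) 0 y) := by
      intro y
      have h1 : (MeasurableEquiv.piFinSuccAbove (fun _ : Fin (m+1) => ℂ) 0 y).1 = y 0 := rfl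
      have h2 : (MeasurableEquiv.piFinSuccAbove (fun _ : Fin (m+1) => ℂ) 0 y).2
          = fun j => y (Fin.succAbove 0 j) := rfl
      have hnsq : nsq y = ‖y 0‖ ^ 2 + nsq (fun j => y (Fin.succAbove 0 j)) :=
        Fin.sum_univ_succAbove (fun k => ‖y k‖ ^ 2) 0
      have hdens : dens y = g1 (y 0) * dens (fun j => y (Fin.succAbove 0 j)) :=
        Fin.prod_univ_succAbove (fun k => g1 (y k)) 0
      have hiff : y ∈ BadE ↔
          ‖y 0‖ < c * Real.sqrt (nsq (fun j => y (Fin.succAbove 0 j))) := by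
        rw [hBadE]
        simp only [Set.mem_setOf_eq]
        rw [hnsq]
        exact cond_iff hC0 hClt _ _ (norm_nonneg _) (nsq_nonneg _)
      by_cases hmem : y ∈ BadE
      · rw [Set.indicator_of_mem hmem, hPhi]
        dsimp only
        rw [Set.indicator_of_mem (by
          simp only [Set.mem_setOf_eq, h1, h2]
          exact hiff.mp hmem)]
        rw [h1, h2, hdens, ENNReal.ofReal_mul (g1_nonneg _)]
        ring
      · rw [Set.indicator_of_notMem hmem, hPhi]
        dsimp only
        rw [Set.indicator_of_notMem (by
          simp only [Set.mem_setOf_eq, h1, h2]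
          exact fun h => hmem (hiff.mpr h))]
        rw [mul_zero]
    calc ∫⁻ y, BadE.indicator (fun z => ENNReal.ofReal (dens z)) y ∂volume
        = ∫⁻ y, Φ (MeasurableEquiv.piFinSuccAbove (fun _ => ℂ) 0 y)
            ∂(Measure.pi fun _ : Fin (m+1) => (volume : Measure ℂ)) := by
          rw [← volume_pi]; exact lintegral_congr hpt
      _ = ∫⁻ p, Φ p ∂((volume : Measure ℂ).prod
            (Measure.pi fun _ : Fin m => (volume : Measure ℂ))) :=
          hmp.lintegral_comp hPhimeas
      _ = ∫⁻ y : Fin m → ℂ, ∫⁻ a : ℂ, Φ (a, y) ∂volume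
            ∂(Measure.pi fun _ : Fin m => (volume : Measure ℂ)) :=
          lintegral_prod_symm Φ hPhimeas.aemeasurable
      _ = ∫⁻ y : Fin m → ℂ, ENNReal.ofReal (dens y)
            * ENNReal.ofReal (1 - Real.exp (-(c ^ 2 * nsq y)))
            ∂(Measure.pi fun _ : Fin m => (volume : Measure ℂ)) := by
          refine lintegral_congr fun y => ?_
          have hpt2 : ∀ a : ℂ, Φ (a, y) = ENNReal.ofReal (dens y)
              * Set.indicator {x : ℂ | ‖x‖ < c * Real.sqrt (nsq y)}
                (fun x => ENNReal.ofReal (g1 x)) a := by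
            intro a
            rw [hPhi]
            dsimp only
            by_cases h : ‖a‖ < c * Real.sqrt (nsq y)
            · rw [Set.indicator_of_mem (by exact h),
                Set.indicator_of_mem (by exact h)]
            · rw [Set.indicator_of_notMem (by exact h),
                Set.indicator_of_notMem (by exact h)]
          simp_rw [hpt2]
          rw [lintegral_const_mul _ (Measurable.indicator
            (continuous_g1.measurable.ennreal_ofReal)
            (isOpen_lt continuous_norm continuous_const).measurableSet)]
          congr 1
          rw [lintegral_disc' (mul_nonneg hc0 (Real.sqrt_nonneg _))]
          congr 2
          rw [mul_pow, Real.sq_sqrt (nsq_nonneg y)]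
      _ = ENNReal.ofReal (1 - (1 - C ^ 2) ^ m) := by
          have hfg : ∀ y : Fin m → ℂ,
              ENNReal.ofReal (dens y) * ENNReal.ofReal (1 - Real.exp (-(c ^ 2 * nsq y)))
              = ENNReal.ofReal (dens y)
                - ENNReal.ofReal (dens y * Real.exp (-(c ^ 2 * nsq y))) := by
            intro y
            rw [← ENNReal.ofReal_mul (dens_nonneg y), mul_sub, mul_one,
              ENNReal.ofReal_sub _ (mul_nonneg (dens_nonneg y) (Real.exp_pos _).le)]
          simp_rw [hfg]
          set g2 : ℂ → ℝ := fun a => g1 a * Real.exp (-(c ^ 2 * ‖a‖ ^ 2)) with hg2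
          have hg2m : Measurable g2 := by
            apply continuous_g1.measurable.mul
            fun_prop
          have hg20 : ∀ a, 0 ≤ g2 a := fun a => mul_nonneg (g1_nonneg a) (Real.exp_pos _).le
          have hprod : ∀ y : Fin m → ℂ,
              dens y * Real.exp (-(c ^ 2 * nsq y)) = ∏ j, g2 (y j) := by
            intro y
            rw [hg2]
            rw [Finset.prod_mul_distrib]
            congr 1
            rw [← Real.exp_sum]
            congr 1
            rw [nsq, Finset.mul_sum]
            rw [← Finset.sum_neg_distrib]
          have hg2int : ∫⁻ a : ℂ, ENNReal.ofReal (g2 a) ∂volume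
              = ENNReal.ofReal (1 - C ^ 2) := by
            have h1c : 0 < 1 + c ^ 2 := by positivity
            have hptg : ∀ a : ℂ, ENNReal.ofReal (g2 a) = ENNReal.ofReal (Real.pi⁻¹)
                * ENNReal.ofReal (Real.exp (-((1 + c ^ 2) * ‖a‖ ^ 2))) := by
              intro a
              rw [hg2]
              dsimp only
              rw [g1, mul_assoc, ← Real.exp_add,
                ENNReal.ofReal_mul (by positivity)]
              congr 2
              ring
            simp_rw [hptg]
            rw [lintegral_const_mul _ (by fun_prop), lintegral_cexp_norm h1c,
              ← ENNReal.ofReal_mul (by positivity)]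
            congr 1
            have hinv : (1 + c ^ 2)⁻¹ = 1 - C ^ 2 := by
              rw [hcsq]
              rw [show 1 + C ^ 2 / (1 - C ^ 2) = (1 - C ^ 2)⁻¹ by
                field_simp; ring]
              rw [inv_inv]
            rw [← hinv]
            field_simp
          have hdint : ∫⁻ y : Fin m → ℂ, ENNReal.ofReal (dens y)
              ∂(Measure.pi fun _ : Fin m => (volume : Measure ℂ)) = 1 := by
            rw [← volume_pi]
            have : ∀ y : Fin m → ℂ, ENNReal.ofReal (dens y)
                = ENNReal.ofReal (∏ j, g1 (y j)) := fun y => rfl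
            simp_rw [this]
            rw [lint_pi_prod m g1 continuous_g1.measurable g1_nonneg, lintegral_g1, one_pow]
          have hgint : ∫⁻ y : Fin m → ℂ,
              ENNReal.ofReal (dens y * Real.exp (-(c ^ 2 * nsq y)))
              ∂(Measure.pi fun _ : Fin m => (volume : Measure ℂ))
              = ENNReal.ofReal (1 - C ^ 2) ^ m := by
            rw [← volume_pi]
            simp_rw [hprod]
            rw [lint_pi_prod m g2 hg2m hg20, hg2int]
          have hgmeas : Measurable fun y : Fin m → ℂ =>
              ENNReal.ofReal (dens y * Real.exp (-(c ^ 2 * nsq y))) := by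
            apply Measurable.ennreal_ofReal
            apply continuous_dens.measurable.mul
            apply Measurable.exp
            apply Measurable.neg
            exact (continuous_nsq.measurable.const_mul _)
          have hgle : (fun y : Fin m → ℂ =>
              ENNReal.ofReal (dens y * Real.exp (-(c ^ 2 * nsq y))))
              ≤ᵐ[Measure.pi fun _ : Fin m => (volume : Measure ℂ)]
              fun y => ENNReal.ofReal (dens y) := by
            refine Filter.Eventually.of_forall fun y => ?_
            apply ENNReal.ofReal_le_ofReal
            have hexp : Real.exp (-(c ^ 2 * nsq y)) ≤ 1 := by
              rw [Real.exp_le_one_iff]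
              have : 0 ≤ c ^ 2 * nsq y := mul_nonneg (sq_nonneg c) (nsq_nonneg y)
              linarith
            nlinarith [dens_nonneg y]
          have hfin2 : ∫⁻ y : Fin m → ℂ,
              ENNReal.ofReal (dens y * Real.exp (-(c ^ 2 * nsq y)))
              ∂(Measure.pi fun _ : Fin m => (volume : Measure ℂ)) ≠ ⊤ := by
            rw [hgint]
            exact ENNReal.pow_ne_top ENNReal.ofReal_ne_top
          rw [lintegral_sub hgmeas hfin2 hgle, hdint, hgint]
          rw [← ENNReal.ofReal_pow h1C.le, ← ENNReal.ofReal_one,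
            ← ENNReal.ofReal_sub _ (pow_nonneg h1C.le m)]
  -- put everything together
  rw [← hright, hleft, hcomp]
  apply ENNReal.ofReal_le_ofReal
  have hbern := one_add_mul_le_pow (a := -C ^ 2) (by nlinarith) m
  rw [show (1 : ℝ) + -C ^ 2 = 1 - C ^ 2 by ring] at hbern
  have hmc : ((m : ℝ) + 1 - 1) = (m : ℝ) := by ring
  push_cast
  rw [hmc]
  nlinarith

end Stmt16
end AuxStmt16


/-- Probabilistic lower bound on the eigenvalue gap quantity `d(μ)`: with `μ` uniform on the
complex unit sphere (modelled as a unitarily invariant probability measure concentrated on the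
sphere), and `𝛌` appearing exactly `p` times among `𝛌^{(1)},…,𝛌^{(n)}`, for every
`C ∈ [0, 1/√(d−1)]` the probability that `|μ*(𝛌^{(j)} − 𝛌)| ≥ C‖𝛌^{(j)} − 𝛌‖₂` holds for all
`j` with `𝛌^{(j)} ≠ 𝛌` is at least `1 − (n−p)(d−1)C²`. -/
theorem stmt_16 (d n p : ℕ) (hd : 2 ≤ d)
    (P : Measure (Fin d → ℂ)) [IsProbabilityMeasure P]
    (hsphere : ∀ᵐ x ∂P, ∑ k, ‖x k‖ ^ 2 = 1)
    (hrot : ∀ U ∈ Matrix.unitaryGroup (Fin d) ℂ, P.map (fun x => U *ᵥ x) = P)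
    (L : Fin n → Fin d → ℂ) (l : Fin d → ℂ)
    (hmult : (Finset.univ.filter (fun i : Fin n => L i = l)).card = p)
    (C : ℝ) (hC0 : 0 ≤ C) (hC1 : C ≤ 1 / Real.sqrt (d - 1)) :
    ENNReal.ofReal (1 - (n - p : ℝ) * ((d : ℝ) - 1) * C ^ 2) ≤
      P {μ | ∀ j : Fin n, L j ≠ l →
        C * Real.sqrt (∑ k, ‖L j k - l k‖ ^ 2) ≤
          ‖∑ k, starRingEnd ℂ (μ k) * (L j k - l k)‖} := by
  classical
  open Stmt16 in
  have hd1 : (1 : ℝ) ≤ (d : ℝ) - 1 := by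
    have h2 : (2 : ℝ) ≤ (d : ℝ) := by exact_mod_cast hd
    linarith
  have hsqrt1 : 1 ≤ Real.sqrt ((d : ℝ) - 1) := by
    have h := Real.sqrt_le_sqrt hd1
    rwa [Real.sqrt_one] at h
  have hC1' : C ≤ 1 := by
    refine hC1.trans ?_
    rw [div_le_one (by linarith : (0:ℝ) < Real.sqrt ((d : ℝ) - 1))]
    exact hsqrt1
  -- the good event
  set G : Set (Fin d → ℂ) := {μ | ∀ j : Fin n, L j ≠ l →
      C * Real.sqrt (∑ k, ‖L j k - l k‖ ^ 2) ≤
        ‖∑ k, starRingEnd ℂ (μ k) * (L j k - l k)‖} with hG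
  -- bad events
  have hbadset : ∀ j : Fin n,
      {μ : Fin d → ℂ | ‖∑ k, starRingEnd ℂ (μ k) * (L j k - l k)‖
          < C * Real.sqrt (∑ k, ‖L j k - l k‖ ^ 2)}
        = {μ : Fin d → ℂ | ‖star μ ⬝ᵥ (fun k => L j k - l k)‖
          < C * Real.sqrt (Stmt16.nsq (fun k => L j k - l k))} := fun j => rfl
  have hGmeas : MeasurableSet G := by
    have hGi : G = ⋂ j : Fin n, {μ : Fin d → ℂ | L j ≠ l →
        C * Real.sqrt (∑ k, ‖L j k - l k‖ ^ 2) ≤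
          ‖∑ k, starRingEnd ℂ (μ k) * (L j k - l k)‖} := by
      ext μ; simp [hG, Set.mem_iInter]
    rw [hGi]
    refine MeasurableSet.iInter fun j => ?_
    by_cases hj : L j = l
    · have : {μ : Fin d → ℂ | L j ≠ l →
          C * Real.sqrt (∑ k, ‖L j k - l k‖ ^ 2) ≤
            ‖∑ k, starRingEnd ℂ (μ k) * (L j k - l k)‖} = Set.univ := by
        ext μ; simp [hj]
      rw [this]; exact MeasurableSet.univ
    · have : {μ : Fin d → ℂ | L j ≠ l →
          C * Real.sqrt (∑ k, ‖L j k - l k‖ ^ 2) ≤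
            ‖∑ k, starRingEnd ℂ (μ k) * (L j k - l k)‖}
          = {μ : Fin d → ℂ | C * Real.sqrt (Stmt16.nsq (fun k => L j k - l k)) ≤
            ‖star μ ⬝ᵥ (fun k => L j k - l k)‖} := by
        ext μ; simp only [Set.mem_setOf_eq, hj, ne_eq, not_false_iff, true_implies]
        rfl
      rw [this]
      exact (isClosed_le continuous_const
        (Stmt16.continuous_dot (fun k => L j k - l k))).measurableSet
  -- cardinality
  have hpn : p ≤ n := by
    rw [← hmult]
    exact le_trans (Finset.card_filter_le _ _) (by simp)
  have hcard : (Finset.univ.filter (fun j : Fin n => ¬ (L j = l))).card = n - p := by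
    have h2 := Finset.card_filter_add_card_filter_not
      (s := (Finset.univ : Finset (Fin n))) (p := fun i : Fin n => L i = l)
    simp only [Finset.card_univ, Fintype.card_fin] at h2
    omega
  -- union bound
  have hsub : Gᶜ ⊆ ⋃ j ∈ Finset.univ.filter (fun j : Fin n => ¬ (L j = l)),
      {μ : Fin d → ℂ | ‖∑ k, starRingEnd ℂ (μ k) * (L j k - l k)‖
        < C * Real.sqrt (∑ k, ‖L j k - l k‖ ^ 2)} := by
    intro μ hμ
    simp only [hG, Set.mem_compl_iff, Set.mem_setOf_eq, not_forall] at hμ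
    obtain ⟨j, hj, hlt⟩ := hμ
    refine Set.mem_iUnion₂.mpr ⟨j, ?_, not_le.mp hlt⟩
    simp [hj]
  have hbad : ∀ j : Fin n, L j ≠ l →
      P {μ : Fin d → ℂ | ‖∑ k, starRingEnd ℂ (μ k) * (L j k - l k)‖
        < C * Real.sqrt (∑ k, ‖L j k - l k‖ ^ 2)}
      ≤ ENNReal.ofReal (((d : ℝ) - 1) * C ^ 2) := by
    intro j hj
    rw [hbadset j]
    refine Stmt16.key hd P hsphere hrot hC0 hC1' (fun k => L j k - l k) ?_
    intro hzero
    apply hj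
    funext k
    have := congrFun hzero k
    simpa [sub_eq_zero] using this
  have hcompl : P Gᶜ ≤ ENNReal.ofReal (((n : ℝ) - p) * (((d : ℝ) - 1) * C ^ 2)) := by
    calc P Gᶜ ≤ P (⋃ j ∈ Finset.univ.filter (fun j : Fin n => ¬ (L j = l)),
        {μ : Fin d → ℂ | ‖∑ k, starRingEnd ℂ (μ k) * (L j k - l k)‖
          < C * Real.sqrt (∑ k, ‖L j k - l k‖ ^ 2)}) := measure_mono hsub
      _ ≤ ∑ j ∈ Finset.univ.filter (fun j : Fin n => ¬ (L j = l)),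
          P {μ : Fin d → ℂ | ‖∑ k, starRingEnd ℂ (μ k) * (L j k - l k)‖
            < C * Real.sqrt (∑ k, ‖L j k - l k‖ ^ 2)} :=
          measure_biUnion_finset_le _ _
      _ ≤ ∑ j ∈ Finset.univ.filter (fun j : Fin n => ¬ (L j = l)),
          ENNReal.ofReal (((d : ℝ) - 1) * C ^ 2) := by
          refine Finset.sum_le_sum fun j hj => ?_
          exact hbad j (by simpa using (Finset.mem_filter.mp hj).2)
      _ = ENNReal.ofReal (((n : ℝ) - p) * (((d : ℝ) - 1) * C ^ 2)) := by
          rw [Finset.sum_const, hcard, nsmul_eq_mul]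
          rw [show ((n - p : ℕ) : ENNReal) = ENNReal.ofReal ((n - p : ℕ) : ℝ) by
            rw [ENNReal.ofReal_natCast]]
          rw [← ENNReal.ofReal_mul (by positivity)]
          congr 2
          rw [Nat.cast_sub hpn]
  -- final arithmetic
  have ha0 : 0 ≤ ((n : ℝ) - p) * (((d : ℝ) - 1) * C ^ 2) := by
    have : (0:ℝ) ≤ (n : ℝ) - p := by
      rw [sub_nonneg]; exact_mod_cast hpn
    have h2 : (0:ℝ) ≤ ((d : ℝ) - 1) * C ^ 2 := by positivity
    positivity
  have hPG : P G = 1 - P Gᶜ := by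
    rw [prob_compl_eq_one_sub hGmeas]
    exact (ENNReal.sub_sub_cancel ENNReal.one_ne_top prob_le_one).symm
  calc ENNReal.ofReal (1 - (n - p : ℝ) * ((d : ℝ) - 1) * C ^ 2)
      = ENNReal.ofReal (1 - ((n : ℝ) - p) * (((d : ℝ) - 1) * C ^ 2)) := by ring_nf
    _ = 1 - ENNReal.ofReal (((n : ℝ) - p) * (((d : ℝ) - 1) * C ^ 2)) := by
        rw [ENNReal.ofReal_sub _ ha0, ENNReal.ofReal_one]
    _ ≤ 1 - P Gᶜ := tsub_le_tsub_left hcompl 1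
    _ = P G := hPG.symm
end

section
/- Eigenvector matrix condition vs eigenvalue conditions: if X ∈ ℂ^{p×p} is an invertible eigenvector matrix of a diagonalizable G ∈ ℂ^{p×p} with columns of unit 2-norm, and κ(λᵢ) = ‖yᵢ‖₂ denotes the condition number of the i-th (simple) eigenvalue where Y = X⁻* has columns yᵢ, then κ₂(X)² ≤ p·(κ(λ₁)² + ⋯ + κ(λ_p)²), where κ₂(X) = ‖X‖₂‖X⁻¹‖₂. -/
open Matrix
open scoped Matrix.Norms.L2Operator ComplexConjugate

lemma opnorm_le_frob {n m : ℕ} (A : Matrix (Fin n) (Fin m) ℂ) :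
    ‖A‖ ≤ Real.sqrt (∑ i, ∑ j, ‖A i j‖ ^ 2) := by
  rw [Matrix.l2_opNorm_def]
  apply ContinuousLinearMap.opNorm_le_bound _ (Real.sqrt_nonneg _)
  intro x
  have hx : ∀ i, ‖(Matrix.toEuclideanLin A) x i‖ ≤
      Real.sqrt (∑ j, ‖A i j‖ ^ 2) * ‖x‖ := by
    intro i
    set r : EuclideanSpace ℂ (Fin m) := WithLp.toLp 2 (fun j => conj (A i j)) with hr
    have h1 : (Matrix.toEuclideanLin A) x i = inner ℂ r x := by
      simp [hr, Matrix.toEuclideanLin_apply, Matrix.mulVec, dotProduct,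
        EuclideanSpace.inner_eq_star_dotProduct, mul_comm]
    have h2 : ‖r‖ = Real.sqrt (∑ j, ‖A i j‖ ^ 2) := by
      rw [EuclideanSpace.norm_eq]
      simp [hr]
    rw [h1]
    calc ‖(inner ℂ r x : ℂ)‖ ≤ ‖r‖ * ‖x‖ := norm_inner_le_norm r x
      _ = _ := by rw [h2]
  calc ‖(Matrix.toEuclideanLin A) x‖
      = Real.sqrt (∑ i, ‖(Matrix.toEuclideanLin A) x i‖ ^ 2) := by
        rw [EuclideanSpace.norm_eq]
    _ ≤ Real.sqrt (∑ i, (∑ j, ‖A i j‖ ^ 2) * ‖x‖ ^ 2) := by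
        apply Real.sqrt_le_sqrt
        apply Finset.sum_le_sum
        intro i _
        have := hx i
        have h3 : (Real.sqrt (∑ j, ‖A i j‖ ^ 2) * ‖x‖) ^ 2
            = (∑ j, ‖A i j‖ ^ 2) * ‖x‖ ^ 2 := by
          rw [mul_pow, Real.sq_sqrt (by positivity)]
        rw [← h3]
        exact pow_le_pow_left₀ (norm_nonneg _) this 2
    _ = Real.sqrt ((∑ i, ∑ j, ‖A i j‖ ^ 2) * ‖x‖ ^ 2) := by
        rw [← Finset.sum_mul]
    _ = Real.sqrt (∑ i, ∑ j, ‖A i j‖ ^ 2) * ‖x‖ := by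
        rw [Real.sqrt_mul (by positivity), Real.sqrt_sq (norm_nonneg _)]

/-- Eigenvector matrix condition number versus eigenvalue condition numbers: if `X` is an
invertible eigenvector matrix of a diagonalizable `G` (with distinct eigenvalues) whose columns
have unit 2-norm, and `κ(λᵢ) = ‖yᵢ‖₂` where `yᵢ*` is the `i`-th row of `X⁻¹`, then
`κ₂(X)² ≤ p (κ(λ₁)² + ⋯ + κ(λ_p)²)`, where `κ₂(X) = ‖X‖₂‖X⁻¹‖₂`. -/
theorem stmt_18 (p : ℕ) (G X : Matrix (Fin p) (Fin p) ℂ) (hX : IsUnit X)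
    (lam : Fin p → ℂ) (hdistinct : Function.Injective lam)
    (heig : G * X = X * Matrix.diagonal lam)
    (hcols : ∀ j, ∑ i, ‖X i j‖ ^ 2 = 1) :
    (‖X‖ * ‖X⁻¹‖) ^ 2 ≤ (p : ℝ) * ∑ i, ∑ j, ‖X⁻¹ i j‖ ^ 2 := by
  have hXp : ‖X‖ ≤ Real.sqrt p := by
    have := opnorm_le_frob X
    rw [Finset.sum_comm] at this
    rwa [show (∑ j, ∑ i, ‖X i j‖ ^ 2) = (p : ℝ) from by
      simp only [hcols]
      simp] at this
  have hXi : ‖X⁻¹‖ ≤ Real.sqrt (∑ i, ∑ j, ‖X⁻¹ i j‖ ^ 2) := opnorm_le_frob _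
  calc (‖X‖ * ‖X⁻¹‖) ^ 2
      ≤ (Real.sqrt p * Real.sqrt (∑ i, ∑ j, ‖X⁻¹ i j‖ ^ 2)) ^ 2 := by
        apply pow_le_pow_left₀ (mul_nonneg (norm_nonneg _) (norm_nonneg _))
        exact mul_le_mul hXp hXi (norm_nonneg _) (Real.sqrt_nonneg _)
    _ = (p : ℝ) * ∑ i, ∑ j, ‖X⁻¹ i j‖ ^ 2 := by
        have hS : (0:ℝ) ≤ ∑ i, ∑ j, ‖X⁻¹ i j‖ ^ 2 :=
          Finset.sum_nonneg fun i _ => Finset.sum_nonneg fun j _ => sq_nonneg _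
        rw [mul_pow, Real.sq_sqrt (Nat.cast_nonneg p), Real.sq_sqrt hS]
end
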